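/- arXiv:2102.06307 — 6 statements merged into one kernel-verified Lean document; each statement's English description precedes it below -/
import Mathlib

section
/- With ψ and α_p as above, for all 0 ≤ p ≤ d−1, α_p − α_{p+1} = 2^{−d} ∑_{s=0}^{d} binom(d−p−1, s−1) ψ(s/d), and consequently exp(−1/(2ν²))/2^{p+1} ≤ α_p − α_{p+1} ≤ 1/2^{p+1}. -/
theorem stmt7 (d p : ℕ) (hd : 2 ≤ d) (hp : p ≤ d - 1) (ν : ℝ) (hν : 0 < ν)
    (ψ : ℝ → ℝ)
    (hψ : ∀ t, ψ t = Real.exp (-(1 - Real.sqrt (1 - t)) ^ 2 / (2 * ν ^ 2)))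
    (α : ℕ → ℝ)
    (hα : ∀ p, α p = (1 / 2 ^ d) *
      ∑ s ∈ Finset.range (d + 1), (Nat.choose (d - p) s : ℝ) * ψ ((s : ℝ) / d)) :
    α p - α (p + 1) = (1 / 2 ^ d) *
        ∑ s ∈ Finset.range (d + 1),
          (if s = 0 then 0 else (Nat.choose (d - p - 1) (s - 1) : ℝ)) * ψ ((s : ℝ) / d)
      ∧ Real.exp (-1 / (2 * ν ^ 2)) / 2 ^ (p + 1) ≤ α p - α (p + 1)
      ∧ α p - α (p + 1) ≤ 1 / 2 ^ (p + 1) := by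
  have hpd : p + 1 ≤ d := by omega
  have hν2 : (0:ℝ) < 2 * ν ^ 2 := by positivity
  set m := d - p - 1 with hm
  have hdp : d - p = m + 1 := by omega
  have hdp1 : d - (p + 1) = m := by omega
  set E := Real.exp (-1 / (2 * ν ^ 2)) with hE
  -- first identity
  have heq : α p - α (p+1) = (1 / 2 ^ d) * ∑ s ∈ Finset.range (d + 1),
      (if s = 0 then 0 else ((m.choose (s - 1)) : ℝ)) * ψ ((s : ℝ) / d) := by
    rw [hα, hα, ← mul_sub, ← Finset.sum_sub_distrib]
    congr 1
    apply Finset.sum_congr rfl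
    intro s _
    rcases s with _ | t
    · simp [hdp, hdp1]
    · rw [hdp, hdp1]
      simp [Nat.choose_succ_succ]
      ring
  -- bounds on ψ
  have hψ_le : ∀ t : ℝ, ψ t ≤ 1 := by
    intro t; rw [hψ]
    apply Real.exp_le_one_iff.mpr
    apply div_nonpos_of_nonpos_of_nonneg
    · nlinarith [sq_nonneg (1 - Real.sqrt (1 - t))]
    · linarith
  have hψ_ge : ∀ t : ℝ, 0 ≤ t → E ≤ ψ t := by
    intro t ht; rw [hψ, hE]
    apply Real.exp_le_exp.mpr
    have h0 := Real.sqrt_nonneg (1 - t)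
    have h2 : Real.sqrt (1 - t) ≤ 2 := by
      calc Real.sqrt (1 - t) ≤ Real.sqrt 4 := Real.sqrt_le_sqrt (by linarith)
      _ = 2 := by rw [show (4:ℝ) = 2^2 by norm_num, Real.sqrt_sq (by norm_num)]
    have h1 : (1 - Real.sqrt (1 - t))^2 ≤ 1 := by nlinarith
    rw [div_le_div_iff₀ hν2 hν2]
    nlinarith
  have hψ_pos : ∀ t : ℝ, 0 < E := fun _ => Real.exp_pos _
  -- sum of coefficients
  have hcsum : ∑ s ∈ Finset.range (d + 1),
      (if s = 0 then (0:ℝ) else ((m.choose (s - 1)) : ℝ)) = 2 ^ m := by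
    rw [Finset.sum_range_succ']
    simp only [if_neg (Nat.succ_ne_zero _), Nat.add_sub_cancel, if_pos rfl, add_zero]
    rw [← Finset.sum_subset (Finset.range_subset_range.mpr (by omega : m + 1 ≤ d))
      (by intro x _ hx
          simp only [Finset.mem_range, not_lt] at hx
          rw [Nat.choose_eq_zero_of_lt (by omega)]; norm_num)]
    rw [← Nat.cast_sum, Nat.sum_range_choose]
    push_cast; ring
  set c : ℕ → ℝ := fun s => if s = 0 then (0:ℝ) else ((m.choose (s - 1)) : ℝ) with hc
  have hcnn : ∀ s, 0 ≤ c s := by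
    intro s; rw [hc]; dsimp; split <;> positivity
  -- sum bounds
  have hSle : ∑ s ∈ Finset.range (d + 1), c s * ψ ((s : ℝ) / d) ≤ 2 ^ m := by
    calc ∑ s ∈ Finset.range (d + 1), c s * ψ ((s : ℝ) / d)
        ≤ ∑ s ∈ Finset.range (d + 1), c s * 1 := by
          apply Finset.sum_le_sum
          intro s _
          exact mul_le_mul_of_nonneg_left (hψ_le _) (hcnn s)
      _ = 2 ^ m := by simpa using hcsum
  have hSge : E * 2 ^ m ≤ ∑ s ∈ Finset.range (d + 1), c s * ψ ((s : ℝ) / d) := by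
    calc E * 2 ^ m = ∑ s ∈ Finset.range (d + 1), c s * E := by
          rw [← Finset.sum_mul, hcsum]; ring
      _ ≤ ∑ s ∈ Finset.range (d + 1), c s * ψ ((s : ℝ) / d) := by
          apply Finset.sum_le_sum
          intro s _
          exact mul_le_mul_of_nonneg_left (hψ_ge _ (by positivity)) (hcnn s)
  have hd2 : (2:ℝ) ^ d = 2 ^ (p + 1) * 2 ^ m := by
    rw [← pow_add]; congr 1; omega
  have h2d : (0:ℝ) < 2 ^ d := by positivity
  refine ⟨heq, ?_, ?_⟩
  · rw [heq]
    have : E / 2 ^ (p+1) = (1 / 2 ^ d) * (E * 2 ^ m) := by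
      rw [hd2]; field_simp
    rw [this]
    exact mul_le_mul_of_nonneg_left hSge (by positivity)
  · rw [heq]
    have : (1:ℝ) / 2 ^ (p+1) = (1 / 2 ^ d) * (2 ^ m) := by
      rw [hd2]; field_simp
    rw [this]
    exact mul_le_mul_of_nonneg_left hSle (by positivity)
end

section
/- With α_p as above, define c_d = (d−1)α₀α₂ − dα₁² + α₀α₁. Then c_d = (1/(d·4^d)) ∑_{0 ≤ s < t ≤ d} binom(d,s) binom(d,t) (s−t)² ψ(s/d) ψ(t/d). -/
open Finset

private lemma key_choose (n s : ℕ) :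
    ((n : ℝ) - s) * (n.choose s) = n * ((n - 1).choose s) := by
  rcases n with _ | m
  · cases s <;> simp
  · rcases le_or_gt s (m + 1) with h | h
    · have hnat := Nat.choose_mul_succ_eq m s
      have hc : ((m + 1 - s : ℕ) : ℝ) = (m + 1 : ℝ) - s := by
        push_cast [Nat.cast_sub h]; ring
      have h2 : (((m + 1).choose s : ℝ)) * ((m + 1 - s : ℕ) : ℝ)
          = ((m.choose s : ℝ)) * ((m : ℝ) + 1) := by
        exact_mod_cast congrArg (Nat.cast : ℕ → ℝ) hnat.symm
      rw [hc] at h2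
      simp only [Nat.add_sub_cancel]
      push_cast
      linear_combination h2
    · have h1 : (m + 1).choose s = 0 := Nat.choose_eq_zero_of_lt h
      have h2 : m.choose s = 0 := Nat.choose_eq_zero_of_lt (by omega)
      simp only [Nat.add_sub_cancel, h1, h2]
      simp

private lemma double_sum (n : ℕ) (F : ℕ → ℕ → ℝ)
    (hsymm : ∀ s t, F s t = F t s) (hdiag : ∀ s, F s s = 0) :
    ∑ s ∈ range (n + 1), ∑ t ∈ range (n + 1), F s t
      = 2 * ∑ s ∈ range (n + 1), ∑ t ∈ Ioc s n, F s t := by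
  have hsplit : ∀ s t : ℕ, F s t =
      (if s < t then F s t else 0) + (if t < s then F s t else 0) := by
    intro s t
    rcases lt_trichotomy s t with h | h | h
    · simp [h, not_lt_of_gt h]
    · subst h; simp [hdiag]
    · simp [h, not_lt_of_gt h]
  have hIoc : ∀ s : ℕ, (range (n + 1)).filter (fun t => s < t) = Ioc s n := by
    intro s
    ext t
    simp [Finset.mem_filter, Finset.mem_range, Finset.mem_Ioc]
    omega
  calc ∑ s ∈ range (n + 1), ∑ t ∈ range (n + 1), F s t
      = ∑ s ∈ range (n + 1), ((∑ t ∈ range (n + 1), if s < t then F s t else 0)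
          + ∑ t ∈ range (n + 1), if t < s then F s t else 0) := by
        refine Finset.sum_congr rfl fun s _ => ?_
        rw [← Finset.sum_add_distrib]
        exact Finset.sum_congr rfl fun t _ => hsplit s t
    _ = (∑ s ∈ range (n + 1), ∑ t ∈ range (n + 1), if s < t then F s t else 0)
          + ∑ s ∈ range (n + 1), ∑ t ∈ range (n + 1), if t < s then F s t else 0 := by
        rw [Finset.sum_add_distrib]
    _ = 2 * ∑ s ∈ range (n + 1), ∑ t ∈ Ioc s n, F s t := by
        have h1 : ∀ G : ℕ → ℕ → ℝ,
            ∑ s ∈ range (n + 1), (∑ t ∈ range (n + 1), if s < t then G s t else 0)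
              = ∑ s ∈ range (n + 1), ∑ t ∈ Ioc s n, G s t := by
          intro G
          refine Finset.sum_congr rfl fun s _ => ?_
          rw [← hIoc s, Finset.sum_filter]
        have h2 : ∑ s ∈ range (n + 1), (∑ t ∈ range (n + 1), if t < s then F s t else 0)
            = ∑ s ∈ range (n + 1), ∑ t ∈ range (n + 1), if s < t then F t s else 0 := by
          rw [Finset.sum_comm]
        rw [h1, h2, h1]
        have : ∑ s ∈ range (n + 1), ∑ t ∈ Ioc s n, F t s
            = ∑ s ∈ range (n + 1), ∑ t ∈ Ioc s n, F s t := by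
          refine Finset.sum_congr rfl fun s _ => Finset.sum_congr rfl fun t _ => hsymm t s
        rw [this]; ring

theorem stmt8 (d : ℕ) (hd : 2 ≤ d) (ν : ℝ) (hν : 0 < ν)
    (ψ : ℝ → ℝ)
    (hψ : ∀ t, ψ t = Real.exp (-(1 - Real.sqrt (1 - t)) ^ 2 / (2 * ν ^ 2)))
    (α : ℕ → ℝ)
    (hα : ∀ p, α p = (1 / 2 ^ d) *
      ∑ s ∈ Finset.range (d + 1), (Nat.choose (d - p) s : ℝ) * ψ ((s : ℝ) / d))
    (c : ℝ) (hc : c = (d - 1) * α 0 * α 2 - d * α 1 ^ 2 + α 0 * α 1) :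
    c = (1 / (d * 4 ^ d)) *
      ∑ s ∈ Finset.range (d + 1), ∑ t ∈ Finset.Ioc s d,
        (Nat.choose d s : ℝ) * (Nat.choose d t) * ((s : ℝ) - t) ^ 2 *
          ψ ((s : ℝ) / d) * ψ ((t : ℝ) / d) := by
  set g : ℕ → ℝ := fun s => (Nat.choose d s : ℝ) * ψ ((s : ℝ) / d) with hg
  set x : ℕ → ℝ := fun s => (d : ℝ) - s with hx
  set A := ∑ s ∈ range (d + 1), g s with hA
  set B := ∑ s ∈ range (d + 1), x s * g s with hB
  set C2 := ∑ s ∈ range (d + 1), (x s) ^ 2 * g s with hC2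
  have hd0 : (d : ℝ) ≠ 0 := by positivity
  have hd1 : (d : ℝ) - 1 ≠ 0 := by
    have : (2 : ℝ) ≤ d := by exact_mod_cast hd
    linarith
  have h2d : (2 : ℝ) ^ d ≠ 0 := by positivity
  -- step 1
  have e0 : α 0 = A / 2 ^ d := by
    rw [hα 0, hA]
    simp [hg]
    ring
  -- step 2
  have e1 : α 1 = B / ((d : ℝ) * 2 ^ d) := by
    rw [hα 1, hB]
    have hterm : ∀ s ∈ range (d + 1),
        (d : ℝ) * ((Nat.choose (d - 1) s : ℝ) * ψ ((s : ℝ) / d)) = x s * g s := by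
      intro s _
      have := key_choose d s
      simp only [hx, hg]
      linear_combination (-ψ ((s : ℝ) / d)) * this
    rw [← Finset.sum_congr rfl hterm, ← Finset.mul_sum]
    field_simp
  -- step 3
  have e2 : α 2 = (C2 - B) / ((d : ℝ) * ((d : ℝ) - 1) * 2 ^ d) := by
    rw [hα 2, hC2, hB]
    have hterm : ∀ s ∈ range (d + 1),
        (d : ℝ) * ((d : ℝ) - 1) * ((Nat.choose (d - 2) s : ℝ) * ψ ((s : ℝ) / d))
          = (x s) ^ 2 * g s - x s * g s := by
      intro s _
      have k1 := key_choose d s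
      have k2 := key_choose (d - 1) s
      have hcast : ((d - 1 : ℕ) : ℝ) = (d : ℝ) - 1 := by
        have : 1 ≤ d := by omega
        push_cast [Nat.cast_sub this]; ring
      rw [hcast] at k2
      have hdd : (d - 1 : ℕ) - 1 = d - 2 := by omega
      rw [hdd] at k2
      simp only [hx, hg]
      linear_combination (-ψ ((s : ℝ) / d)) * ((d : ℝ) * k2 + ((d : ℝ) - 1 - (s : ℝ)) * k1)
    rw [← Finset.sum_sub_distrib, ← Finset.sum_congr rfl hterm, ← Finset.mul_sum]
    field_simp
  -- step 4 : d * 4^d * c = A * C2 - B^2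
  have h4 : (4 : ℝ) ^ d = 2 ^ d * 2 ^ d := by
    rw [← mul_pow]; norm_num
  have step4 : (d : ℝ) * 4 ^ d * c = A * C2 - B ^ 2 := by
    rw [hc, e0, e1, e2, h4]
    field_simp
    ring
  -- step 5 : A * C2 - B^2 equals the double sum
  set T := ∑ s ∈ Finset.range (d + 1), ∑ t ∈ Finset.Ioc s d,
      (Nat.choose d s : ℝ) * (Nat.choose d t) * ((s : ℝ) - t) ^ 2 *
        ψ ((s : ℝ) / d) * ψ ((t : ℝ) / d) with hT
  have step5 : A * C2 - B ^ 2 = T := by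
    set F : ℕ → ℕ → ℝ := fun s t => g s * g t * ((s : ℝ) - t) ^ 2 with hF
    have hFd : ∑ s ∈ range (d + 1), ∑ t ∈ range (d + 1), F s t
        = 2 * ∑ s ∈ range (d + 1), ∑ t ∈ Ioc s d, F s t := by
      apply double_sum
      · intro s t; simp only [hF]; ring
      · intro s; simp only [hF]; ring
    have hTF : T = ∑ s ∈ range (d + 1), ∑ t ∈ Ioc s d, F s t := by
      rw [hT]
      refine Finset.sum_congr rfl fun s _ => Finset.sum_congr rfl fun t _ => ?_
      simp only [hF, hg]
      ring
    have hAC : A * C2 = ∑ s ∈ range (d + 1), ∑ t ∈ range (d + 1),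
        g s * ((x t) ^ 2 * g t) := by
      rw [hA, hC2, Finset.sum_mul_sum]
    have hCA : C2 * A = ∑ s ∈ range (d + 1), ∑ t ∈ range (d + 1),
        (x s) ^ 2 * g s * g t := by
      rw [hA, hC2, Finset.sum_mul_sum]
    have hBB : B * B = ∑ s ∈ range (d + 1), ∑ t ∈ range (d + 1),
        (x s * g s) * (x t * g t) := by
      rw [hB, Finset.sum_mul_sum]
    have key2 : 2 * (A * C2 - B ^ 2) = ∑ s ∈ range (d + 1), ∑ t ∈ range (d + 1), F s t := by
      have : 2 * (A * C2 - B ^ 2) = A * C2 + C2 * A - 2 * (B * B) := by ring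
      rw [this, hAC, hCA, hBB, ← Finset.sum_add_distrib, Finset.mul_sum,
        ← Finset.sum_sub_distrib]
      refine Finset.sum_congr rfl fun s hs => ?_
      rw [← Finset.sum_add_distrib, Finset.mul_sum, ← Finset.sum_sub_distrib]
      refine Finset.sum_congr rfl fun t ht => ?_
      simp only [hF, hx]
      ring
    rw [hTF]
    linarith [key2, hFd]
  -- conclude
  have hne : (d : ℝ) * 4 ^ d ≠ 0 := by positivity
  have h := step4.trans step5
  rw [← h]
  field_simp
end

section
/- With α_p and c_d as above, exp(−1/ν²)/4 ≤ c_d ≤ 1/4; in particular c_d > 0, since exp(−1/(2ν²))² = exp(−1/ν²) lower-bounds each product ψ(s/d)ψ(t/d) and ∑_{s<t} binom(d,s)binom(d,t)(s−t)² = d·4^{d−1}. -/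
lemma aux1 (d s : ℕ) (hd : 1 ≤ d) : d * (d-1).choose s = d.choose s * (d - s) := by
  have h := Nat.add_one_mul_choose_eq (d-1) s
  rw [Nat.sub_add_cancel hd] at h
  rw [h, Nat.choose_succ_right_eq]

lemma aux1R (d s : ℕ) (hd : 1 ≤ d) (hs : s ≤ d) :
    (d : ℝ) * ((d-1).choose s : ℝ) = ((d:ℝ) - s) * (d.choose s : ℝ) := by
  have h : ((d * (d-1).choose s : ℕ) : ℝ) = ((d.choose s * (d - s) : ℕ) : ℝ) :=
    congrArg _ (aux1 d s hd)
  push_cast [Nat.cast_sub hs] at h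
  linarith

lemma aux2R (d s : ℕ) (hd : 2 ≤ d) (hs : s ≤ d) :
    (d : ℝ) * ((d:ℝ) - 1) * ((d-2).choose s : ℝ)
      = ((d:ℝ) - s) * ((d:ℝ) - s - 1) * (d.choose s : ℝ) := by
  rcases eq_or_lt_of_le hs with rfl | hlt
  · rw [Nat.choose_eq_zero_of_lt (by omega)]
    simp
  · have h1 := aux1 d s (by omega)
    have h2 := aux1 (d-1) s (by omega)
    rw [show d - 1 - 1 = d - 2 by omega] at h2
    have hnat : d * ((d-1) * (d-2).choose s) = (d.choose s * (d-s)) * (d-1-s) := by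
      rw [h2, ← Nat.mul_assoc, h1]
    have h : ((d * ((d-1) * (d-2).choose s) : ℕ) : ℝ) = (((d.choose s * (d-s)) * (d-1-s) : ℕ) : ℝ) :=
      congrArg _ hnat
    push_cast [Nat.cast_sub hs, Nat.cast_sub (by omega : 1 ≤ d), Nat.cast_sub (show s ≤ d - 1 by omega)] at h
    ring_nf at h ⊢
    linarith

lemma symm_sum (n : ℕ) (u v : ℕ → ℝ) :
    ∑ s ∈ Finset.range n, ∑ t ∈ Finset.range n, u s * u t * (v s - v t)^2
      = 2 * ((∑ s ∈ Finset.range n, u s) * (∑ s ∈ Finset.range n, (v s)^2 * u s)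
        - (∑ s ∈ Finset.range n, v s * u s)^2) := by
  have h : ∀ s t : ℕ, u s * u t * (v s - v t)^2
      = (v s)^2 * u s * u t - 2 * ((v s * u s) * (v t * u t)) + u s * ((v t)^2 * u t) := by
    intros; ring
  simp only [h, Finset.sum_add_distrib, Finset.sum_sub_distrib, ← Finset.mul_sum, ← Finset.sum_mul]
  ring

theorem stmt9 (d : ℕ) (hd : 2 ≤ d) (ν : ℝ) (hν : 0 < ν)
    (ψ : ℝ → ℝ)
    (hψ : ∀ t, ψ t = Real.exp (-(1 - Real.sqrt (1 - t)) ^ 2 / (2 * ν ^ 2)))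
    (α : ℕ → ℝ)
    (hα : ∀ p, α p = (1 / 2 ^ d) *
      ∑ s ∈ Finset.range (d + 1), (Nat.choose (d - p) s : ℝ) * ψ ((s : ℝ) / d))
    (c : ℝ) (hc : c = (d - 1) * α 0 * α 2 - d * α 1 ^ 2 + α 0 * α 1) :
    Real.exp (-1 / ν ^ 2) / 4 ≤ c ∧ c ≤ 1 / 4 ∧ 0 < c := by
  have hdR : (2:ℝ) ≤ (d:ℝ) := by exact_mod_cast hd
  have hd0 : (d:ℝ) ≠ 0 := by linarith
  have hd0' : (0:ℝ) < d := by linarith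
  have hdm1 : (d:ℝ) - 1 ≠ 0 := by linarith
  have h2d : ((2:ℝ))^d ≠ 0 := by positivity
  -- ψ bounds
  have hψlb : ∀ s ∈ Finset.range (d+1), Real.exp (-1/(2*ν^2)) ≤ ψ ((s:ℝ)/d) := by
    intro s hs
    have hsle : (s:ℝ) ≤ d := by exact_mod_cast Finset.mem_range_succ_iff.mp hs
    have h1 : (s:ℝ)/d ≤ 1 := by rw [div_le_one hd0']; exact hsle
    have hsq : 0 ≤ Real.sqrt (1 - (s:ℝ)/d) := Real.sqrt_nonneg _
    have hsq1 : Real.sqrt (1 - (s:ℝ)/d) ≤ 1 := by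
      apply Real.sqrt_le_one.mpr
      have : (0:ℝ) ≤ (s:ℝ)/d := by positivity
      linarith
    have hq1 : (1 - Real.sqrt (1 - (s:ℝ)/d))^2 ≤ 1 := by nlinarith
    rw [hψ]
    apply Real.exp_le_exp.mpr
    have h2ν : (0:ℝ) < 2*ν^2 := by positivity
    rw [div_le_div_iff₀ h2ν h2ν]
    nlinarith
  have hψub : ∀ s ∈ Finset.range (d+1), ψ ((s:ℝ)/d) ≤ 1 := by
    intro s hs
    rw [hψ]
    apply Real.exp_le_one_iff.mpr
    have hq0 : 0 ≤ (1 - Real.sqrt (1 - (s:ℝ)/d))^2 := sq_nonneg _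
    have h2ν : (0:ℝ) < 2*ν^2 := by positivity
    apply div_nonpos_of_nonpos_of_nonneg (by linarith) (le_of_lt h2ν)
  have hψpos : ∀ s : ℕ, 0 < ψ ((s:ℝ)/d) := by
    intro s; rw [hψ]; exact Real.exp_pos _
  -- notation for sums
  set u : ℕ → ℝ := fun s => (d.choose s : ℝ) * ψ ((s:ℝ)/d) with hu
  set v : ℕ → ℝ := fun s => (d:ℝ) - (s:ℝ) with hv
  set A := ∑ s ∈ Finset.range (d+1), u s with hA
  set B := ∑ s ∈ Finset.range (d+1), v s * u s with hB
  set D := ∑ s ∈ Finset.range (d+1), (v s)^2 * u s with hD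
  -- alpha identities
  have e0 : α 0 = (1/2^d) * A := by
    rw [hα 0, hA]
    simp only [hu, Nat.sub_zero]
  have hkey1 : (d:ℝ) * ∑ s ∈ Finset.range (d+1), ((d-1).choose s : ℝ) * ψ ((s:ℝ)/d) = B := by
    rw [hB, Finset.mul_sum]
    apply Finset.sum_congr rfl
    intro s hs
    have hsle : s ≤ d := Finset.mem_range_succ_iff.mp hs
    rw [← mul_assoc, aux1R d s (by omega) hsle]
    simp only [hu, hv]
    ring
  have e1 : α 1 = (1/2^d) * B / d := by
    rw [hα 1, eq_div_iff hd0]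
    linear_combination (1/(2:ℝ)^d) * hkey1
  have hkey2 : ((d:ℝ) * ((d:ℝ)-1)) * ∑ s ∈ Finset.range (d+1), ((d-2).choose s : ℝ) * ψ ((s:ℝ)/d)
      = D - B := by
    have key : ((d:ℝ) * ((d:ℝ)-1)) * ∑ s ∈ Finset.range (d+1), ((d-2).choose s : ℝ) * ψ ((s:ℝ)/d)
        = ∑ s ∈ Finset.range (d+1), (v s * (v s - 1)) * u s := by
      rw [Finset.mul_sum]
      apply Finset.sum_congr rfl
      intro s hs
      have hsle : s ≤ d := Finset.mem_range_succ_iff.mp hs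
      rw [← mul_assoc, aux2R d s hd hsle]
      simp only [hu, hv]
      ring
    rw [key, hD, hB, ← Finset.sum_sub_distrib]
    apply Finset.sum_congr rfl
    intro s _
    ring
  have e2 : α 2 = (1/2^d) * (D - B) / ((d:ℝ) * ((d:ℝ) - 1)) := by
    rw [hα 2, eq_div_iff (mul_ne_zero hd0 hdm1)]
    linear_combination (1/(2:ℝ)^d) * hkey2
  -- value of c
  have hcval : c = (A * D - B^2) / ((d:ℝ) * 4^d) := by
    rw [hc, e0, e1, e2]
    have h4 : ((4:ℝ))^d = (2:ℝ)^d * (2:ℝ)^d := by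
      rw [← mul_pow]; norm_num
    field_simp
    rw [h4]
    ring
  -- double sums
  have key := symm_sum (d+1) u v
  have key0 := symm_sum (d+1) (fun s => (d.choose s : ℝ)) v
  -- binomial sums
  have hA0 : ∑ s ∈ Finset.range (d+1), (d.choose s : ℝ) = 2^d := by
    exact_mod_cast congrArg (Nat.cast : ℕ → ℝ) (Nat.sum_range_choose d)
  have hsum1 : ∑ s ∈ Finset.range (d+1), ((d-1).choose s : ℝ) = 2^(d-1) := by
    rw [show d + 1 = (d-1) + 1 + 1 by omega, Finset.sum_range_succ,
        Nat.choose_eq_zero_of_lt (by omega)]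
    have : ∑ s ∈ Finset.range ((d-1)+1), ((d-1).choose s : ℝ) = 2^(d-1) := by
      exact_mod_cast congrArg (Nat.cast : ℕ → ℝ) (Nat.sum_range_choose (d-1))
    simp [this]
  have hsum2 : ∑ s ∈ Finset.range (d+1), ((d-2).choose s : ℝ) = 2^(d-2) := by
    rw [show d + 1 = (d-2) + 1 + 1 + 1 by omega, Finset.sum_range_succ,
        Nat.choose_eq_zero_of_lt (by omega), Finset.sum_range_succ,
        Nat.choose_eq_zero_of_lt (by omega)]
    have : ∑ s ∈ Finset.range ((d-2)+1), ((d-2).choose s : ℝ) = 2^(d-2) := by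
      exact_mod_cast congrArg (Nat.cast : ℕ → ℝ) (Nat.sum_range_choose (d-2))
    simp [this]
  have hB0 : ∑ s ∈ Finset.range (d+1), v s * (d.choose s : ℝ) = (d:ℝ) * 2^(d-1) := by
    rw [← hsum1, Finset.mul_sum]
    apply Finset.sum_congr rfl
    intro s hs
    have hsle : s ≤ d := Finset.mem_range_succ_iff.mp hs
    simp only [hv]
    rw [← aux1R d s (by omega) hsle]
  have hD0 : ∑ s ∈ Finset.range (d+1), (v s)^2 * (d.choose s : ℝ)
      = (d:ℝ) * ((d:ℝ)-1) * 2^(d-2) + (d:ℝ) * 2^(d-1) := by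
    have step : ∑ s ∈ Finset.range (d+1), (v s)^2 * (d.choose s : ℝ)
        = (∑ s ∈ Finset.range (d+1), (v s * (v s - 1)) * (d.choose s : ℝ))
          + ∑ s ∈ Finset.range (d+1), v s * (d.choose s : ℝ) := by
      rw [← Finset.sum_add_distrib]
      apply Finset.sum_congr rfl
      intro s _; ring
    rw [step, hB0]
    congr 1
    rw [← hsum2, Finset.mul_sum]
    apply Finset.sum_congr rfl
    intro s hs
    have hsle : s ≤ d := Finset.mem_range_succ_iff.mp hs
    simp only [hv]
    rw [← aux2R d s hd hsle]
  rw [hA0, hB0, hD0] at key0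
  -- value of key0 RHS
  have hpow1 : (2:ℝ)^(d-1) = 2 * (2:ℝ)^(d-2) := by
    rw [← pow_succ']
    congr 1
    omega
  have hpow2 : (2:ℝ)^d = 4 * (2:ℝ)^(d-2) := by
    rw [show (4:ℝ) = 2^2 by norm_num, ← pow_add]
    congr 1
    omega
  have hpow4 : (4:ℝ)^d = 16 * ((2:ℝ)^(d-2))^2 := by
    rw [show (4:ℝ) = 2*2 by norm_num, mul_pow, hpow2]
    ring
  have hT0 : ∑ s ∈ Finset.range (d+1), ∑ t ∈ Finset.range (d+1),
      (d.choose s : ℝ) * (d.choose t : ℝ) * (v s - v t)^2 = (d:ℝ) * 4^d / 2 := by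
    rw [key0, hpow1, hpow2, hpow4]
    ring
  -- comparison of double sums
  have hlow : Real.exp (-1/ν^2) * ((d:ℝ) * 4^d / 2)
      ≤ ∑ s ∈ Finset.range (d+1), ∑ t ∈ Finset.range (d+1), u s * u t * (v s - v t)^2 := by
    rw [← hT0, Finset.mul_sum]
    apply Finset.sum_le_sum
    intro s hs
    rw [Finset.mul_sum]
    apply Finset.sum_le_sum
    intro t ht
    have h1 := hψlb s hs
    have h2 := hψlb t ht
    have hp1 := hψpos s
    have hp2 := hψpos t
    have hexp : Real.exp (-1/ν^2) = Real.exp (-1/(2*ν^2)) * Real.exp (-1/(2*ν^2)) := by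
      rw [← Real.exp_add]
      congr 1
      field_simp
      ring
    have hee : Real.exp (-1/ν^2) ≤ ψ ((s:ℝ)/d) * ψ ((t:ℝ)/d) := by
      rw [hexp]
      exact mul_le_mul h1 h2 (le_of_lt (Real.exp_pos _)) (le_of_lt hp1)
    calc Real.exp (-1/ν^2) * ((d.choose s : ℝ) * (d.choose t : ℝ) * (v s - v t)^2)
        ≤ (ψ ((s:ℝ)/d) * ψ ((t:ℝ)/d)) * ((d.choose s : ℝ) * (d.choose t : ℝ) * (v s - v t)^2) :=
          mul_le_mul_of_nonneg_right hee (by positivity)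
      _ = u s * u t * (v s - v t)^2 := by simp only [hu]; ring
  have hhigh : ∑ s ∈ Finset.range (d+1), ∑ t ∈ Finset.range (d+1), u s * u t * (v s - v t)^2
      ≤ (d:ℝ) * 4^d / 2 := by
    rw [← hT0]
    apply Finset.sum_le_sum
    intro s hs
    apply Finset.sum_le_sum
    intro t ht
    have h1 := hψub s hs
    have h2 := hψub t ht
    have hp1 := hψpos s
    have hp2 := hψpos t
    calc u s * u t * (v s - v t)^2
        = (ψ ((s:ℝ)/d) * ψ ((t:ℝ)/d)) * ((d.choose s : ℝ) * (d.choose t : ℝ) * (v s - v t)^2) := by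
          simp only [hu]; ring
      _ ≤ 1 * ((d.choose s : ℝ) * (d.choose t : ℝ) * (v s - v t)^2) := by
          apply mul_le_mul_of_nonneg_right _ (by positivity)
          exact mul_le_one₀ h1 (le_of_lt hp2) h2
      _ = (d.choose s : ℝ) * (d.choose t : ℝ) * (v s - v t)^2 := one_mul _
  -- combine
  rw [key, ← hA, ← hD, ← hB] at hlow hhigh
  have h4pos : (0:ℝ) < (d:ℝ) * 4^d := by positivity
  have hexp_pos := Real.exp_pos (-1/ν^2)
  have hcl : Real.exp (-1/ν^2) / 4 ≤ c := by
    rw [hcval, le_div_iff₀ h4pos]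
    have hq : Real.exp (-1/ν^2) / 4 * ((d:ℝ) * 4^d)
        = (Real.exp (-1/ν^2) * ((d:ℝ) * 4^d / 2)) / 2 := by ring
    rw [hq]
    linarith
  have hcu : c ≤ 1/4 := by
    rw [hcval, div_le_iff₀ h4pos]
    linarith
  exact ⟨hcl, hcu, lt_of_lt_of_le (by positivity) hcl⟩
end

section
/- Generalized α coefficients: with z and π as above, for p, q ≥ 0 with p+q ≤ d, E[π z₁⋯z_p (1−z_{p+1})⋯(1−z_{p+q})] = 2^{−d} ∑_{s=0}^{d} binom(d−p−q, s−q) ψ(s/d). -/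
open Finset

lemma finCardFilter (d : ℕ) (P : ℕ → Prop) [DecidablePred P] :
    (Finset.univ.filter (fun j : Fin d => P ↑j)).card = ((Finset.Iio d).filter P).card := by
  refine Finset.card_nbij (i := fun j : Fin d => (j : ℕ)) ?_ ?_ ?_
  · intro a ha
    simp only [Finset.mem_coe, Finset.coe_filter, Set.mem_setOf_eq, mem_filter, mem_univ, true_and] at ha
    simp [ha, a.isLt]
  · exact fun a _ b _ h => Fin.val_injective h
  · intro b hb
    simp only [Finset.coe_filter, Set.mem_setOf_eq, mem_Iio] at hb
    exact ⟨⟨b, hb.1⟩, by simp [hb.2], rfl⟩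

lemma cardI (d p q : ℕ) (hpq : p + q ≤ d) :
    (Finset.univ.filter (fun j : Fin d => p ≤ ↑j ∧ ↑j < p + q)).card = q := by
  rw [finCardFilter d (fun j => p ≤ j ∧ j < p + q)]
  have : (Finset.Iio d).filter (fun j => p ≤ j ∧ j < p + q) = Finset.Ico p (p+q) := by
    ext j; simp only [mem_filter, mem_Iio, mem_Ico]; omega
  rw [this, Nat.card_Ico]; omega

lemma cardR (d p q : ℕ) :
    (Finset.univ.filter (fun j : Fin d => p + q ≤ ↑j)).card = d - p - q := by
  rw [finCardFilter d (fun j => p + q ≤ j)]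
  have : (Finset.Iio d).filter (fun j => p + q ≤ j) = Finset.Ico (p+q) d := by
    ext j; simp only [mem_filter, mem_Iio, mem_Ico]; omega
  rw [this, Nat.card_Ico]; omega

lemma countLem (d p q s : ℕ) (hpq : p + q ≤ d) :
    (Finset.univ.filter (fun z : Fin d → Bool =>
       ((∀ j : Fin d, ↑j < p → z j = true) ∧
        (∀ j : Fin d, p ≤ ↑j ∧ ↑j < p + q → z j = false)) ∧
       (Finset.univ.filter (fun j => z j = false)).card = s)).card
    = if s < q then 0 else (d - p - q).choose (s - q) := by
  -- the key: for z satisfying the first two conditions, the false set splits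
  have key : ∀ z : Fin d → Bool, (∀ j : Fin d, ↑j < p → z j = true) →
      (∀ j : Fin d, p ≤ ↑j ∧ ↑j < p + q → z j = false) →
      (Finset.univ.filter (fun j => z j = false)) =
        (Finset.univ.filter (fun j : Fin d => p ≤ ↑j ∧ ↑j < p + q)) ∪
        (Finset.univ.filter (fun j : Fin d => p + q ≤ ↑j ∧ z j = false)) := by
    intro z h1 h2
    ext j
    simp only [mem_filter, mem_univ, true_and, mem_union]
    constructor
    · intro hz
      rcases lt_or_ge (j : ℕ) (p+q) with h | h
      · rcases lt_or_ge (j : ℕ) p with h' | h'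
        · rw [h1 j h'] at hz; exact absurd hz (by simp)
        · exact Or.inl ⟨h', h⟩
      · exact Or.inr ⟨h, hz⟩
    · rintro (h | h)
      · exact h2 j h
      · exact h.2
  have keycard : ∀ z : Fin d → Bool, (∀ j : Fin d, ↑j < p → z j = true) →
      (∀ j : Fin d, p ≤ ↑j ∧ ↑j < p + q → z j = false) →
      (Finset.univ.filter (fun j => z j = false)).card =
        q + (Finset.univ.filter (fun j : Fin d => p + q ≤ ↑j ∧ z j = false)).card := by
    intro z h1 h2
    rw [key z h1 h2, Finset.card_union_of_disjoint, cardI d p q hpq]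
    rw [Finset.disjoint_left]
    intro a ha hb
    simp only [mem_filter] at ha hb
    omega
  rcases lt_or_ge s q with hs | hs
  · rw [if_pos hs, Finset.card_eq_zero, Finset.filter_eq_empty_iff]
    rintro z - ⟨⟨h1, h2⟩, h3⟩
    rw [keycard z h1 h2] at h3
    omega
  · rw [if_neg (by omega)]
    rw [← cardR d p q, ← Finset.card_powersetCard]
    refine Finset.card_nbij'
      (i := fun z => Finset.univ.filter (fun j : Fin d => p + q ≤ ↑j ∧ z j = false))
      (j := fun G => fun k : Fin d => decide (¬((p ≤ (k:ℕ) ∧ (k:ℕ) < p + q) ∨ k ∈ G)))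
      ?_ ?_ ?_ ?_
    · rintro z hz
      simp only [Finset.mem_coe, mem_filter, mem_univ, true_and] at hz
      obtain ⟨⟨h1, h2⟩, h3⟩ := hz
      rw [Finset.mem_coe, Finset.mem_powersetCard]
      constructor
      · intro j hj
        simp only [mem_filter, mem_univ, true_and] at hj ⊢
        exact hj.1
      · have hk := keycard z h1 h2
        rw [hk] at h3
        beta_reduce
        omega
    · rintro G hG
      rw [Finset.mem_coe, Finset.mem_powersetCard] at hG
      obtain ⟨hsub, hcard⟩ := hG
      have hGmem : ∀ j ∈ G, p + q ≤ (j : ℕ) := by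
        intro j hj
        have := hsub hj
        simp only [mem_filter, mem_univ, true_and] at this
        exact this
      simp only [Finset.mem_coe, mem_filter, mem_univ, true_and]
      refine ⟨⟨?_, ?_⟩, ?_⟩
      · intro j hj
        simp only [decide_eq_true_eq]
        intro h
        rcases h with h | h
        · omega
        · exact absurd (hGmem j h) (by omega)
      · intro j hj
        simp only [decide_eq_false_iff_not, not_not]
        exact Or.inl hj
      · have : (Finset.univ.filter (fun j : Fin d =>
            (decide (¬((p ≤ ↑j ∧ ↑j < p + q) ∨ j ∈ G)) : Bool) = false)) =
            (Finset.univ.filter (fun j : Fin d => p ≤ ↑j ∧ ↑j < p + q)) ∪ G := by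
          ext j
          simp only [mem_filter, mem_univ, true_and, mem_union,
            decide_eq_false_iff_not, not_not]
        rw [this, Finset.card_union_of_disjoint, cardI d p q hpq, hcard]
        · omega
        · rw [Finset.disjoint_left]
          intro a ha hb
          simp only [mem_filter] at ha
          have := hGmem a hb
          omega
    · rintro z hz
      simp only [Finset.mem_coe, mem_filter, mem_univ, true_and] at hz
      obtain ⟨⟨h1, h2⟩, h3⟩ := hz
      funext j
      rcases lt_or_ge (j : ℕ) p with h | h
      · rw [h1 j h]
        apply decide_eq_true
        rintro (hc | hc)
        · omega
        · have := (mem_filter.mp hc).2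
          rw [h1 j h] at this; simp at this
      · rcases lt_or_ge (j : ℕ) (p + q) with h' | h'
        · rw [h2 j ⟨h, h'⟩]
          apply decide_eq_false
          exact fun hn => hn (Or.inl ⟨h, h'⟩)
        · cases hzj : z j
          · apply decide_eq_false
            exact fun hn => hn (Or.inr (mem_filter.mpr ⟨mem_univ _, ⟨h', hzj⟩⟩))
          · apply decide_eq_true
            rintro (hc | hc)
            · omega
            · have := (mem_filter.mp hc).2
              rw [hzj] at this; simp at this
    · rintro G hG
      rw [Finset.mem_coe, Finset.mem_powersetCard] at hG
      obtain ⟨hsub, hcard⟩ := hG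
      have hGmem : ∀ j ∈ G, p + q ≤ (j : ℕ) := by
        intro j hj
        have := hsub hj
        simp only [mem_filter, mem_univ, true_and] at this
        exact this
      ext j
      simp only [mem_filter, mem_univ, true_and, decide_eq_false_iff_not, not_not]
      constructor
      · rintro ⟨hj, hc | hc⟩
        · omega
        · exact hc
      · intro hj
        exact ⟨hGmem j hj, Or.inr hj⟩
/-- Generalized α coefficients: expectation of
`π z₁⋯z_p (1-z_{p+1})⋯(1-z_{p+q})` over i.i.d. Bernoulli(1/2) coordinates,
with `π = ψ(S/d)` and `S` the number of zero coordinates; here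
`binom(n,k) = 0` when `k < 0`. -/
theorem stmt15 (d p q : ℕ) (hd : 1 ≤ d) (hpq : p + q ≤ d) (ν : ℝ) (hν : 0 < ν)
    (ψ : ℝ → ℝ)
    (hψ : ∀ t, ψ t = Real.exp (-(1 - Real.sqrt (1 - t)) ^ 2 / (2 * ν ^ 2))) :
    (1 / 2 ^ d) * ∑ z : Fin d → Bool,
        (ψ (((Finset.univ.filter (fun j => z j = false)).card : ℝ) / d) *
          (∏ j ∈ Finset.univ.filter (fun j : Fin d => (j : ℕ) < p),
            (if z j then (1 : ℝ) else 0)) *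
          (∏ j ∈ Finset.univ.filter (fun j : Fin d => p ≤ (j : ℕ) ∧ (j : ℕ) < p + q),
            (1 - if z j then (1 : ℝ) else 0)))
    = (1 / 2 ^ d) * ∑ s ∈ Finset.range (d + 1),
        (if s < q then 0 else (Nat.choose (d - p - q) (s - q) : ℝ)) * ψ ((s : ℝ) / d) := by
  congr 1
  have hstep : ∀ z : Fin d → Bool,
      ψ (((Finset.univ.filter (fun j => z j = false)).card : ℝ) / d) *
        (∏ j ∈ Finset.univ.filter (fun j : Fin d => (j : ℕ) < p),
          (if z j then (1 : ℝ) else 0)) *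
        (∏ j ∈ Finset.univ.filter (fun j : Fin d => p ≤ (j : ℕ) ∧ (j : ℕ) < p + q),
          (1 - if z j then (1 : ℝ) else 0))
      = if ((∀ j : Fin d, ↑j < p → z j = true) ∧
            (∀ j : Fin d, p ≤ ↑j ∧ ↑j < p + q → z j = false))
        then ψ (((Finset.univ.filter (fun j => z j = false)).card : ℝ) / d) else 0 := by
    intro z
    have e1 : (∏ j ∈ Finset.univ.filter (fun j : Fin d => (j : ℕ) < p),
        (if z j then (1 : ℝ) else 0))
        = if (∀ j : Fin d, ↑j < p → z j = true) then 1 else 0 := by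
      rw [Finset.prod_boole]
      simp only [Finset.mem_filter, Finset.mem_univ, true_and]
    have e2 : (∏ j ∈ Finset.univ.filter (fun j : Fin d => p ≤ (j : ℕ) ∧ (j : ℕ) < p + q),
        (1 - if z j then (1 : ℝ) else 0))
        = if (∀ j : Fin d, p ≤ ↑j ∧ ↑j < p + q → z j = false) then 1 else 0 := by
      have : ∀ j ∈ Finset.univ.filter (fun j : Fin d => p ≤ (j : ℕ) ∧ (j : ℕ) < p + q),
          (1 - if z j then (1 : ℝ) else 0) = if z j = false then 1 else 0 := by
        intro j _; cases hz : z j <;> simp [hz]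
      rw [Finset.prod_congr rfl this, Finset.prod_boole]
      simp only [Finset.mem_filter, Finset.mem_univ, true_and, and_imp]
    rw [e1, e2]
    by_cases hc : ((∀ j : Fin d, ↑j < p → z j = true) ∧
        (∀ j : Fin d, p ≤ ↑j ∧ ↑j < p + q → z j = false))
    · rw [if_pos hc, if_pos hc.1, if_pos hc.2]; ring
    · rw [if_neg hc]
      rcases not_and_or.mp hc with h | h
      · rw [if_neg h]; ring
      · rw [if_neg h]; ring
  rw [Finset.sum_congr rfl (fun z _ => hstep z), ← Finset.sum_filter]
  have hmaps : ∀ z ∈ Finset.univ.filter (fun z : Fin d → Bool =>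
      (∀ j : Fin d, ↑j < p → z j = true) ∧
      (∀ j : Fin d, p ≤ ↑j ∧ ↑j < p + q → z j = false)),
      (Finset.univ.filter (fun j => z j = false)).card ∈ Finset.range (d + 1) := by
    intro z _
    rw [Finset.mem_range]
    have := Finset.card_filter_le (Finset.univ : Finset (Fin d)) (fun j => z j = false)
    simp only [Finset.card_univ, Fintype.card_fin] at this
    omega
  rw [← Finset.sum_fiberwise_of_maps_to hmaps
    (fun z => ψ (((Finset.univ.filter (fun j => z j = false)).card : ℝ) / d))]
  refine Finset.sum_congr rfl fun s hs => ?_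
  have : ∀ z ∈ (Finset.univ.filter (fun z : Fin d → Bool =>
      (∀ j : Fin d, ↑j < p → z j = true) ∧
      (∀ j : Fin d, p ≤ ↑j ∧ ↑j < p + q → z j = false))).filter
      (fun z => (Finset.univ.filter (fun j => z j = false)).card = s),
      ψ (((Finset.univ.filter (fun j => z j = false)).card : ℝ) / d) = ψ ((s : ℝ) / d) := by
    intro z hz
    rw [(Finset.mem_filter.mp hz).2]
  rw [Finset.sum_congr rfl this, Finset.sum_const, nsmul_eq_mul, Finset.filter_filter]
  congr 1
  rw [countLem d p q s hpq]
  split_ifs <;> simp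
end

section
/- With the σ coefficients bounds: for d ≥ 2 and ν > 0, |σ₀| ≤ 3d/4, |σ₁| ≤ 1/2, |σ₂| ≤ 2·exp(1/(2ν²)), and |σ₃| ≤ 2·exp(1/(2ν²))/d, where the α_p are defined via ψ as above. -/
open Finset

lemma cheb (R : Finset ℕ) (q f g : ℕ → ℝ) (hq : ∀ i ∈ R, 0 ≤ q i)
    (h : ∀ i ∈ R, ∀ j ∈ R, 0 ≤ (f i - f j) * (g i - g j)) :
    (∑ i ∈ R, q i * f i) * (∑ i ∈ R, q i * g i) ≤
      (∑ i ∈ R, q i) * (∑ i ∈ R, q i * (f i * g i)) := by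
  have key : 0 ≤ ∑ i ∈ R, ∑ j ∈ R, q i * q j * ((f i - f j) * (g i - g j)) :=
    Finset.sum_nonneg fun i hi => Finset.sum_nonneg fun j hj =>
      mul_nonneg (mul_nonneg (hq i hi) (hq j hj)) (h i hi j hj)
  have expand : ∑ i ∈ R, ∑ j ∈ R, q i * q j * ((f i - f j) * (g i - g j))
      = 2 * ((∑ i ∈ R, q i) * (∑ i ∈ R, q i * (f i * g i)))
        - 2 * ((∑ i ∈ R, q i * f i) * (∑ i ∈ R, q i * g i)) := by
    have inner : ∀ i, ∑ j ∈ R, q i * q j * ((f i - f j) * (g i - g j))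
        = q i * (f i * g i) * (∑ j ∈ R, q j) + q i * (∑ j ∈ R, q j * (f j * g j))
          - q i * f i * (∑ j ∈ R, q j * g j) - q i * g i * (∑ j ∈ R, q j * f j) := by
      intro i
      rw [Finset.mul_sum, Finset.mul_sum, Finset.mul_sum, Finset.mul_sum,
        ← Finset.sum_add_distrib, ← Finset.sum_sub_distrib, ← Finset.sum_sub_distrib]
      exact Finset.sum_congr rfl fun j _ => by ring
    rw [Finset.sum_congr rfl fun i _ => inner i]
    rw [Finset.sum_sub_distrib, Finset.sum_sub_distrib, Finset.sum_add_distrib,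
      ← Finset.sum_mul, ← Finset.sum_mul, ← Finset.sum_mul, ← Finset.sum_mul]
    ring
  linarith

lemma mono_chain (F : ℕ → ℝ) (lo hi : ℕ) (h : ∀ s, lo ≤ s → s + 1 ≤ hi → F s ≤ F (s + 1)) :
    ∀ i j, lo ≤ i → i ≤ j → j ≤ hi → F i ≤ F j := by
  intro i j hlo hij hhi
  induction j, hij using Nat.le_induction with
  | base => exact le_refl _
  | succ j hij ih =>
      exact le_trans (ih (by omega)) (h j (by omega) (by omega))

lemma shift1 (d : ℕ) (F : ℕ → ℝ) :
    ∑ s ∈ Finset.range (d + 1), (((d - s) * Nat.choose d s : ℕ) : ℝ) * F s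
      = ∑ s ∈ Finset.range (d + 1), ((s * Nat.choose d s : ℕ) : ℝ) * F (s - 1) := by
  rw [Finset.sum_range_succ, Finset.sum_range_succ']
  simp only [Nat.sub_self, Nat.zero_mul, Nat.cast_zero, zero_mul, add_zero, zero_add]
  refine Finset.sum_congr rfl fun s hs => ?_
  have h1 : (s + 1) * Nat.choose d (s + 1) = (d - s) * Nat.choose d s := by
    rw [mul_comm, Nat.choose_succ_right_eq, mul_comm]
  have h2 : s + 1 - 1 = s := rfl
  rw [h2, h1]

lemma shift2 (d : ℕ) (F : ℕ → ℝ) :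
    ∑ s ∈ Finset.range (d + 1), ((s * Nat.choose d s : ℕ) : ℝ) * F s
      = ∑ s ∈ Finset.range (d + 1), (((d - s) * Nat.choose d s : ℕ) : ℝ) * F (s + 1) := by
  rw [Finset.sum_range_succ', Finset.sum_range_succ]
  simp only [Nat.sub_self, Nat.zero_mul, Nat.cast_zero, zero_mul, add_zero, zero_add]
  refine Finset.sum_congr rfl fun s hs => ?_
  have h1 : (s + 1) * Nat.choose d (s + 1) = (d - s) * Nat.choose d s := by
    rw [mul_comm, Nat.choose_succ_right_eq, mul_comm]
  rw [h1]

lemma nat_id1 (m : ℕ) : ∀ s, (m + 1 - s) * Nat.choose (m + 1) s = (m + 1) * Nat.choose m s := by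
  intro s
  have h1 : Nat.choose (m + 1) (s + 1) * (s + 1) = Nat.choose (m + 1) s * (m + 1 - s) :=
    Nat.choose_succ_right_eq (m + 1) s
  have h2 : Nat.succ m * Nat.choose m s = Nat.choose (m + 1) (s + 1) * (s + 1) :=
    Nat.add_one_mul_choose_eq m s
  calc (m + 1 - s) * Nat.choose (m + 1) s = Nat.choose (m + 1) s * (m + 1 - s) := mul_comm _ _
    _ = Nat.choose (m + 1) (s + 1) * (s + 1) := h1.symm
    _ = Nat.succ m * Nat.choose m s := h2.symm
    _ = (m + 1) * Nat.choose m s := rfl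


set_option maxHeartbeats 1000000 in
lemma final_alg (n t W0 W1 W2 a0 a1 a2 : ℝ)
    (hn2 : 2 ≤ n) (htpos : 0 < t) (hW0pos : 0 < W0) (hW1nn : 0 ≤ W1) (hW1le : W1 ≤ n * W0)
    (C1 : W1 * W1 ≤ W0 * W2)
    (C2 : W0 * (W2 - W1) ≤ W1 * W1)
    (C3 : W0 * W2 - W1 * W1 ≤ n * (W0 * W0) - W0 * W1)
    (e0 : a0 = t * W0) (e1 : n * a1 = t * W1) (e2 : n * ((n - 1) * a2) = t * (W2 - W1))
    (ha0le : a0 ≤ 1) (ha0nn : 0 ≤ a0) :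
    (a1 ^ 2 - a0 * a2 ≤ 1 / (4 * (n - 1)) ∧ -(1 / (4 * (n - 1))) ≤ a1 ^ 2 - a0 * a2)
      ∧ 0 ≤ (n - 2) * (a0 * a2) - (n - 1) * a1 ^ 2 + a0 * a1
      ∧ (n - 2) * (a0 * a2) - (n - 1) * a1 ^ 2 + a0 * a1 ≤ 1 / 2 := by
  have hnpos : (0:ℝ) < n := by linarith
  have hn1 : (1 : ℝ) ≤ n - 1 := by linarith
  have hn1pos : (0:ℝ) < n - 1 := by linarith
  have hnsq : (0:ℝ) < n ^ 2 := by positivity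
  have hVnn : 0 ≤ W0 * W2 - W1 * W1 := by linarith [C1]
  have hXY : W1 * (n * W0 - W1) ≤ (n * W0) ^ 2 / 4 := by
    linarith [sq_nonneg (2 * W1 - n * W0)]
  have hXYnn : 0 ≤ W1 * (n * W0 - W1) := mul_nonneg hW1nn (by linarith)
  have hDrel : n ^ 2 * (n - 1) * (a1 ^ 2 - a0 * a2)
      = t ^ 2 * ((n - 1) * (W1 * W1) - n * (W0 * W2) + n * (W0 * W1)) := by
    linear_combination ((n - 1) * (n * a1 + t * W1)) * e1 - (n * a0) * e2
      - (n * t * (W2 - W1)) * e0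
  have hND_ub : (n - 1) * (W1 * W1) - n * (W0 * W2) + n * (W0 * W1) ≤ (n * W0) ^ 2 / 4 := by
    have hA := mul_nonneg hnpos.le hVnn
    linarith [hA, hXY]
  have hND_lb : -((n * W0) ^ 2 / 4) ≤ (n - 1) * (W1 * W1) - n * (W0 * W2) + n * (W0 * W1) := by
    rcases le_total W1 (n * W0 - W1) with h | h
    · have hhalf : W1 ≤ n * W0 / 2 := by linarith
      have hA : n * (W0 * W2 - W1 * W1) ≤ n * (W0 * W1) :=
        mul_le_mul_of_nonneg_left (by linarith [C2]) hnpos.le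
      have hB : W1 * W1 ≤ (n * W0 / 2) * (n * W0 / 2) :=
        mul_le_mul hhalf hhalf hW1nn (by linarith)
      nlinarith [hA, hB]
    · have hhalf : n * W0 - W1 ≤ n * W0 / 2 := by linarith
      have hA : n * (W0 * W2 - W1 * W1) ≤ n * (W0 * (n * W0 - W1)) :=
        mul_le_mul_of_nonneg_left (by nlinarith [C3]) hnpos.le
      have hB : (n * W0 - W1) * (n * W0 - W1) ≤ (n * W0 / 2) * (n * W0 / 2) :=
        mul_le_mul hhalf hhalf (by linarith) (by linarith)
      nlinarith [hA, hB]
  have hα0sq : t ^ 2 * (n * W0) ^ 2 = n ^ 2 * a0 ^ 2 := by rw [e0]; ring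
  have ha0sq1 : a0 ^ 2 ≤ 1 := by nlinarith [ha0le, ha0nn]
  have h2 : n ^ 2 * a0 ^ 2 / 4 ≤ n ^ 2 / 4 := by
    have := mul_le_mul_of_nonneg_left ha0sq1 (sq_nonneg n)
    linarith
  have hD_ub : a1 ^ 2 - a0 * a2 ≤ 1 / (4 * (n - 1)) := by
    have h1 : n ^ 2 * (n - 1) * (a1 ^ 2 - a0 * a2) ≤ n ^ 2 * a0 ^ 2 / 4 := by
      rw [hDrel]
      calc t ^ 2 * ((n - 1) * (W1 * W1) - n * (W0 * W2) + n * (W0 * W1))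
          ≤ t ^ 2 * ((n * W0) ^ 2 / 4) := mul_le_mul_of_nonneg_left hND_ub (sq_nonneg t)
        _ = n ^ 2 * a0 ^ 2 / 4 := by rw [← hα0sq]; ring
    have h12 : n ^ 2 * ((n - 1) * (a1 ^ 2 - a0 * a2)) ≤ n ^ 2 * (1 / 4) := by linarith
    have h3 : (n - 1) * (a1 ^ 2 - a0 * a2) ≤ 1 / 4 := le_of_mul_le_mul_left h12 hnsq
    rw [le_div_iff₀ (by linarith : (0:ℝ) < 4 * (n - 1))]
    linarith
  have hD_lb : -(1 / (4 * (n - 1))) ≤ a1 ^ 2 - a0 * a2 := by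
    have h1 : -(n ^ 2 * a0 ^ 2 / 4) ≤ n ^ 2 * (n - 1) * (a1 ^ 2 - a0 * a2) := by
      rw [hDrel]
      calc -(n ^ 2 * a0 ^ 2 / 4) = t ^ 2 * (-((n * W0) ^ 2 / 4)) := by rw [← hα0sq]; ring
        _ ≤ t ^ 2 * ((n - 1) * (W1 * W1) - n * (W0 * W2) + n * (W0 * W1)) :=
            mul_le_mul_of_nonneg_left hND_lb (sq_nonneg t)
    have h12 : n ^ 2 * (-(1/4) : ℝ) ≤ n ^ 2 * ((n - 1) * (a1 ^ 2 - a0 * a2)) := by linarith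
    have h3 : (-(1/4) : ℝ) ≤ (n - 1) * (a1 ^ 2 - a0 * a2) :=
      le_of_mul_le_mul_left h12 hnsq
    have h7 : (n - 1) * (-(1 / (4 * (n - 1)))) ≤ (n - 1) * (a1 ^ 2 - a0 * a2) := by
      have h8 : (n - 1) * (-(1 / (4 * (n - 1)))) = -(1/4) := by
        field_simp
      rw [h8]; exact h3
    exact le_of_mul_le_mul_left h7 hn1pos
  have hNrel : n ^ 2 * (n - 1) * ((n - 2) * (a0 * a2) - (n - 1) * a1 ^ 2 + a0 * a1)
      = t ^ 2 * (n * (n - 2) * (W0 * W2 - W1 * W1) + W1 * (n * W0 - W1)) := by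
    linear_combination (n * (n - 2) * a0) * e2 + (n * (n - 2) * t * (W2 - W1)) * e0
      + (-(n - 1) ^ 2 * (n * a1 + t * W1) + n * (n - 1) * a0) * e1
      + (n * (n - 1) * t * W1) * e0
  have hnn2 : (0:ℝ) ≤ n * (n - 2) := by nlinarith
  have hN_lb : 0 ≤ n * (n - 2) * (W0 * W2 - W1 * W1) + W1 * (n * W0 - W1) := by
    have := mul_nonneg hnn2 hVnn
    linarith [hXYnn]
  have hN_ub : n * (n - 2) * (W0 * W2 - W1 * W1) + W1 * (n * W0 - W1)
      ≤ (2 * n - 3) * (n * W0) ^ 2 / 4 := by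
    rcases le_total W1 (n * W0 - W1) with h | h
    · have hhalf : W1 ≤ n * W0 / 2 := by linarith
      have hB1 : W0 * W2 - W1 * W1 ≤ W0 * W1 := by linarith [C2]
      have hB2 : n * (n - 2) * (W0 * W2 - W1 * W1) ≤ n * (n - 2) * (W0 * W1) :=
        mul_le_mul_of_nonneg_left hB1 hnn2
      have hB3 : W0 * W1 ≤ W0 * (n * W0 / 2) := mul_le_mul_of_nonneg_left hhalf hW0pos.le
      have hB4 : n * (n - 2) * (W0 * W1) ≤ n * (n - 2) * (W0 * (n * W0 / 2)) :=
        mul_le_mul_of_nonneg_left hB3 hnn2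
      nlinarith [hB2, hB4, hXY, sq_nonneg (n * W0)]
    · have hhalf : n * W0 - W1 ≤ n * W0 / 2 := by linarith
      have hB1 : W0 * W2 - W1 * W1 ≤ W0 * (n * W0 - W1) := by nlinarith [C3]
      have hB2 : n * (n - 2) * (W0 * W2 - W1 * W1) ≤ n * (n - 2) * (W0 * (n * W0 - W1)) :=
        mul_le_mul_of_nonneg_left hB1 hnn2
      have hB3 : W0 * (n * W0 - W1) ≤ W0 * (n * W0 / 2) :=
        mul_le_mul_of_nonneg_left hhalf hW0pos.le
      have hB4 : n * (n - 2) * (W0 * (n * W0 - W1)) ≤ n * (n - 2) * (W0 * (n * W0 / 2)) :=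
        mul_le_mul_of_nonneg_left hB3 hnn2
      nlinarith [hB2, hB4, hXY, sq_nonneg (n * W0)]
  refine ⟨⟨hD_ub, hD_lb⟩, ?_, ?_⟩
  · have h1 : 0 ≤ n ^ 2 * (n - 1) * ((n - 2) * (a0 * a2) - (n - 1) * a1 ^ 2 + a0 * a1) := by
      rw [hNrel]
      exact mul_nonneg (sq_nonneg t) hN_lb
    have hp : (0:ℝ) < n ^ 2 * (n - 1) := mul_pos hnsq hn1pos
    have h6 := le_of_mul_le_mul_left
      (by linarith : n ^ 2 * (n - 1) * (0:ℝ) ≤ n ^ 2 * (n - 1)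
        * ((n - 2) * (a0 * a2) - (n - 1) * a1 ^ 2 + a0 * a1)) hp
    linarith [h6]
  · have h1 : n ^ 2 * (n - 1) * ((n - 2) * (a0 * a2) - (n - 1) * a1 ^ 2 + a0 * a1)
        ≤ (2 * n - 3) * (n ^ 2 * a0 ^ 2) / 4 := by
      rw [hNrel]
      calc t ^ 2 * (n * (n - 2) * (W0 * W2 - W1 * W1) + W1 * (n * W0 - W1))
          ≤ t ^ 2 * ((2 * n - 3) * (n * W0) ^ 2 / 4) :=
            mul_le_mul_of_nonneg_left hN_ub (sq_nonneg t)
        _ = (2 * n - 3) * (n ^ 2 * a0 ^ 2) / 4 := by rw [← hα0sq]; ring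
    have h2' : (2 * n - 3) * (n ^ 2 * a0 ^ 2) / 4 ≤ (2 * n - 3) * n ^ 2 / 4 := by
      have h3 : (0:ℝ) ≤ 2 * n - 3 := by linarith
      have h5 : n ^ 2 * a0 ^ 2 ≤ n ^ 2 := by
        have := mul_le_mul_of_nonneg_left ha0sq1 (sq_nonneg n)
        linarith
      have := mul_le_mul_of_nonneg_left h5 h3
      linarith
    have h4 : (2 * n - 3) * n ^ 2 / 4 ≤ n ^ 2 * (n - 1) / 2 := by
      linarith [sq_nonneg n]
    have h12 : n ^ 2 * ((n - 1) * ((n - 2) * (a0 * a2) - (n - 1) * a1 ^ 2 + a0 * a1))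
        ≤ n ^ 2 * ((n - 1) / 2) := by linarith
    have h5 : (n - 1) * ((n - 2) * (a0 * a2) - (n - 1) * a1 ^ 2 + a0 * a1) ≤ (n - 1) / 2 :=
      le_of_mul_le_mul_left h12 hnsq
    have h13 : (n - 1) * ((n - 2) * (a0 * a2) - (n - 1) * a1 ^ 2 + a0 * a1)
        ≤ (n - 1) * (1 / 2) := by linarith
    exact le_of_mul_le_mul_left h13 hn1pos

set_option maxHeartbeats 4000000 in
theorem stmt16 (d : ℕ) (hd : 2 ≤ d) (ν : ℝ) (hν : 0 < ν)
    (ψ : ℝ → ℝ)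
    (hψ : ∀ t, ψ t = Real.exp (-(1 - Real.sqrt (1 - t)) ^ 2 / (2 * ν ^ 2)))
    (α : ℕ → ℝ)
    (hα : ∀ p, α p = (1 / 2 ^ d) *
      ∑ s ∈ Finset.range (d + 1), (Nat.choose (d - p) s : ℝ) * ψ ((s : ℝ) / d))
    (c s0 s1 s2 s3 : ℝ)
    (hc : c = (d - 1) * α 0 * α 2 - d * α 1 ^ 2 + α 0 * α 1)
    (hs0 : s0 = (d - 1) * α 2 + α 1) (hs1 : s1 = -α 1)
    (hs2 : s2 = (c + α 1 ^ 2 - α 0 * α 2) / (α 1 - α 2))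
    (hs3 : s3 = (α 1 ^ 2 - α 0 * α 2) / (α 1 - α 2)) :
    |s0| ≤ 3 * d / 4 ∧ |s1| ≤ 1 / 2 ∧
    |s2| ≤ 2 * Real.exp (1 / (2 * ν ^ 2)) ∧
    |s3| ≤ 2 * Real.exp (1 / (2 * ν ^ 2)) / d := by
  obtain ⟨e, rfl⟩ : ∃ e, d = e + 2 := ⟨d - 2, by omega⟩
  push_cast at hc hs0 ⊢
  set n : ℝ := (e : ℝ) + 2 with hndef
  have hn2 : (2 : ℝ) ≤ n := by
    have : (0:ℝ) ≤ (e : ℝ) := Nat.cast_nonneg e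
    rw [hndef]; linarith
  have hnpos : (0 : ℝ) < n := by linarith
  have hν2 : (0 : ℝ) < 2 * ν ^ 2 := by positivity
  set E : ℝ := Real.exp (1 / (2 * ν ^ 2)) with hEdef
  set Einv : ℝ := Real.exp (-(1 / (2 * ν ^ 2))) with hEinvdef
  have hEpos : 0 < E := Real.exp_pos _
  have hEinvpos : 0 < Einv := Real.exp_pos _
  have hEinvE : Einv * E = 1 := by
    rw [hEinvdef, hEdef, ← Real.exp_add]; norm_num
  obtain ⟨w, hwdef⟩ : ∃ w : ℕ → ℝ, ∀ s : ℕ, w s = ψ ((s : ℝ) / n) := ⟨_, fun _ => rfl⟩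
  obtain ⟨G, hGdef⟩ : ∃ G : ℕ → ℝ, ∀ s : ℕ, G s = Real.sqrt (1 - (s : ℝ) / n) :=
    ⟨_, fun _ => rfl⟩
  have hw_exp : ∀ s, w s = Real.exp (-(1 - G s) ^ 2 / (2 * ν ^ 2)) := by
    intro s; rw [hwdef s, hψ, hGdef s]
  have hw_pos : ∀ s, 0 < w s := fun s => by rw [hw_exp]; exact Real.exp_pos _
  have hw_ne : ∀ s, w s ≠ 0 := fun s => (hw_pos s).ne'
  have hw_le1 : ∀ s, w s ≤ 1 := by
    intro s; rw [hw_exp]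
    apply Real.exp_le_one_iff.mpr
    apply div_nonpos_of_nonpos_of_nonneg (neg_nonpos_of_nonneg (sq_nonneg _)) hν2.le
  have hG_nonneg : ∀ s, 0 ≤ G s := fun s => by rw [hGdef s]; exact Real.sqrt_nonneg _
  have hG_le1 : ∀ s, G s ≤ 1 := by
    intro s
    rw [hGdef s]
    have h1 : (0:ℝ) ≤ (s:ℝ) / n := by positivity
    calc Real.sqrt (1 - (s:ℝ)/n) ≤ Real.sqrt 1 := Real.sqrt_le_sqrt (by linarith)
      _ = 1 := Real.sqrt_one
  have hw_ge : ∀ s, Einv ≤ w s := by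
    intro s; rw [hw_exp, hEinvdef]
    apply Real.exp_le_exp.mpr
    rw [show -(1 / (2 * ν ^ 2)) = (-1) / (2 * ν ^ 2) by ring]
    apply (div_le_div_iff_of_pos_right hν2).mpr
    nlinarith [hG_nonneg s, hG_le1 s]
  have hG2 : ∀ s : ℕ, s ≤ e + 2 → G s ^ 2 = 1 - (s : ℝ) / n := by
    intro s hs
    rw [hGdef s]
    apply Real.sq_sqrt
    have h1 : (s : ℝ) ≤ n := by
      rw [hndef]; exact_mod_cast Nat.cast_le.mpr hs
    have h2 : (s : ℝ) / n ≤ 1 := by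
      rw [div_le_one hnpos]; exact h1
    linarith
  -- log-concavity of w
  have LC : ∀ k : ℕ, k + 2 ≤ e + 2 → w k * w (k + 2) ≤ w (k + 1) * w (k + 1) := by
    intro k hk
    have hcast : ((k : ℝ) + 2) ≤ n := by
      rw [hndef]
      have : (k : ℝ) ≤ (e : ℝ) := by exact_mod_cast Nat.cast_le.mpr (by omega : k ≤ e)
      linarith
    -- concavity of sqrt at three consecutive points
    have hcon : G k + G (k + 2) ≤ 2 * G (k + 1) := by
      obtain ⟨A, hAdef⟩ : ∃ A : ℝ, A = 1 - ((k : ℝ) + 1) / n := ⟨_, rfl⟩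
      obtain ⟨δ, hδdef⟩ : ∃ δ : ℝ, δ = 1 / n := ⟨_, rfl⟩
      have hAδ : 0 ≤ A - δ := by
        rw [hAdef, hδdef]
        have : ((k : ℝ) + 2) / n ≤ 1 := by rw [div_le_one hnpos]; exact hcast
        have hexp : 1 - ((k:ℝ) + 1) / n - 1 / n = 1 - ((k:ℝ) + 2) / n := by ring
        rw [hexp]; linarith
      have hδpos : 0 ≤ δ := by rw [hδdef]; positivity
      have hA : 0 ≤ A := by linarith
      have hGk : G k = Real.sqrt (A + δ) := by
        rw [hGdef k, hAdef, hδdef]; congr 1; push_cast; ring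
      have hGk2 : G (k + 2) = Real.sqrt (A - δ) := by
        rw [hGdef (k+2), hAdef, hδdef]; congr 1; push_cast; ring
      have hGk1 : G (k + 1) = Real.sqrt A := by
        rw [hGdef (k+1), hAdef]; congr 1; push_cast; ring
      rw [hGk, hGk2, hGk1]
      have hprod : Real.sqrt (A - δ) * Real.sqrt (A + δ) ≤ A := by
        rw [← Real.sqrt_mul hAδ]
        calc Real.sqrt ((A - δ) * (A + δ)) ≤ Real.sqrt (A * A) := by
              apply Real.sqrt_le_sqrt; nlinarith [sq_nonneg δ]
          _ = A := Real.sqrt_mul_self hA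
      have e1 : Real.sqrt (A - δ) ^ 2 = A - δ := Real.sq_sqrt hAδ
      have e2 : Real.sqrt (A + δ) ^ 2 = A + δ := Real.sq_sqrt (by linarith)
      have e3 : Real.sqrt A ^ 2 = A := Real.sq_sqrt hA
      have hsq : (Real.sqrt (A + δ) + Real.sqrt (A - δ)) ^ 2 ≤ (2 * Real.sqrt A) ^ 2 := by
        nlinarith [hprod]
      have h1 : 0 ≤ Real.sqrt (A + δ) + Real.sqrt (A - δ) :=
        add_nonneg (Real.sqrt_nonneg _) (Real.sqrt_nonneg _)
      have h2 : 0 ≤ 2 * Real.sqrt A := by positivity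
      nlinarith [hsq, h1, h2]
    -- exponent comparison
    rw [hw_exp k, hw_exp (k+1), hw_exp (k+2), ← Real.exp_add, ← Real.exp_add]
    apply Real.exp_le_exp.mpr
    rw [← add_div, ← add_div]
    apply (div_le_div_iff_of_pos_right hν2).mpr
    have hne : n ≠ 0 := hnpos.ne'
    have g1 : n * G k ^ 2 = n - k := by rw [hG2 k (by omega)]; field_simp
    have g2 : n * G (k+1) ^ 2 = n - k - 1 := by
      rw [hG2 (k+1) (by omega)]; push_cast; field_simp; ring
    have g3 : n * G (k+2) ^ 2 = n - k - 2 := by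
      rw [hG2 (k+2) (by omega)]; push_cast; field_simp; ring
    have hzn : n * (G k ^ 2 + G (k+2) ^ 2 - 2 * G (k+1) ^ 2) = 0 := by
      have : n * (G k ^ 2 + G (k+2) ^ 2 - 2 * G (k+1) ^ 2)
          = n * G k ^ 2 + n * G (k+2) ^ 2 - 2 * (n * G (k+1) ^ 2) := by ring
      rw [this, g1, g2, g3]; ring
    have hzero : G k ^ 2 + G (k+2) ^ 2 - 2 * G (k+1) ^ 2 = 0 :=
      (mul_eq_zero.mp hzn).resolve_left hne
    nlinarith [hcon, hzero]
  -- the weighted sums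
  obtain ⟨q, hqdef⟩ : ∃ q : ℕ → ℝ, ∀ s : ℕ, q s = (Nat.choose (e + 2) s : ℝ) * w s :=
    ⟨_, fun _ => rfl⟩
  obtain ⟨R, hRdef⟩ : ∃ R : Finset ℕ, R = Finset.range (e + 2 + 1) := ⟨_, rfl⟩
  have hq_nonneg : ∀ i ∈ R, 0 ≤ q i := by
    intro i _; rw [hqdef i]
    exact mul_nonneg (Nat.cast_nonneg _) (hw_pos i).le
  have hq_pos : ∀ i ∈ R, 0 < q i := by
    intro i hi
    rw [hRdef, Finset.mem_range] at hi
    rw [hqdef i]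
    exact mul_pos (by exact_mod_cast Nat.choose_pos (by omega : i ≤ e + 2)) (hw_pos i)
  obtain ⟨z, hzdef⟩ : ∃ z : ℕ → ℝ, ∀ s : ℕ, z s = n - s := ⟨_, fun _ => rfl⟩
  obtain ⟨a, hadef⟩ : ∃ a : ℕ → ℝ, ∀ s : ℕ, a s = (s : ℝ) * (w (s - 1) * (w s)⁻¹) :=
    ⟨_, fun _ => rfl⟩
  obtain ⟨b, hbdef⟩ : ∃ b : ℕ → ℝ, ∀ s : ℕ, b s = (n - s) * (w (s + 1) * (w s)⁻¹) :=
    ⟨_, fun _ => rfl⟩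
  obtain ⟨W0, hW0def⟩ : ∃ x : ℝ, x = ∑ s ∈ R, q s := ⟨_, rfl⟩
  obtain ⟨W1, hW1def⟩ : ∃ x : ℝ, x = ∑ s ∈ R, q s * z s := ⟨_, rfl⟩
  obtain ⟨W2, hW2def⟩ : ∃ x : ℝ, x = ∑ s ∈ R, q s * (z s * z s) := ⟨_, rfl⟩
  have hmem : ∀ s ∈ R, s ≤ e + 2 := by
    intro s hs; rw [hRdef, Finset.mem_range] at hs; omega
  have hcast_sub : ∀ s ∈ R, ((e + 2 - s : ℕ) : ℝ) = n - s := by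
    intro s hs
    have := hmem s hs
    rw [hndef]; push_cast [Nat.cast_sub this]; ring
  have hW0pos : 0 < W0 := by
    rw [hW0def]
    apply Finset.sum_pos hq_pos
    exact ⟨0, by rw [hRdef]; simp⟩
  have hz_nonneg : ∀ s ∈ R, 0 ≤ z s := by
    intro s hs
    have h1 : (s : ℝ) ≤ n := by
      rw [hndef]; exact_mod_cast Nat.cast_le.mpr (hmem s hs)
    rw [hzdef s]; linarith
  have hz_le : ∀ s ∈ R, z s ≤ n := by
    intro s hs
    have : (0:ℝ) ≤ (s:ℝ) := Nat.cast_nonneg s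
    rw [hzdef s]; linarith
  -- term rewriting for W1
  have hterm1 : ∀ s ∈ R, q s * z s = (((e + 2 - s) * Nat.choose (e + 2) s : ℕ) : ℝ) * w s := by
    intro s hs
    rw [hqdef s, hzdef s]
    push_cast
    rw [hcast_sub s hs]
    ring
  -- identity IA : W1 = ∑ q a
  have IA : W1 = ∑ s ∈ R, q s * a s := by
    rw [hW1def]
    calc ∑ s ∈ R, q s * z s
        = ∑ s ∈ R, (((e + 2 - s) * Nat.choose (e + 2) s : ℕ) : ℝ) * w s :=
          Finset.sum_congr rfl hterm1
      _ = ∑ s ∈ R, ((s * Nat.choose (e + 2) s : ℕ) : ℝ) * w (s - 1) := by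
          rw [hRdef]; exact shift1 (e + 2) w
      _ = ∑ s ∈ R, q s * a s := by
          refine Finset.sum_congr rfl fun s hs => ?_
          rw [hqdef s, hadef s]
          push_cast
          field_simp [hw_ne s]
  -- identity IB : W2 = ∑ q (a z) + W1
  have IB : W2 = (∑ s ∈ R, q s * (a s * z s)) + W1 := by
    rw [hW2def, IA]
    calc ∑ s ∈ R, q s * (z s * z s)
        = ∑ s ∈ R, (((e + 2 - s) * Nat.choose (e + 2) s : ℕ) : ℝ) * (z s * w s) := by
          refine Finset.sum_congr rfl fun s hs => ?_
          rw [hqdef s, hzdef s]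
          push_cast
          rw [hcast_sub s hs]
          ring
      _ = ∑ s ∈ R, ((s * Nat.choose (e + 2) s : ℕ) : ℝ) * (z (s - 1) * w (s - 1)) := by
          rw [hRdef]; exact shift1 (e + 2) (fun s => z s * w s)
      _ = ∑ s ∈ R, (q s * (a s * z s) + q s * a s) := by
          refine Finset.sum_congr rfl fun s hs => ?_
          match s with
          | 0 =>
            rw [hadef 0, hqdef 0, hzdef 0]
            push_cast
            ring
          | Nat.succ k =>
            have hk : (k + 1 : ℕ) - 1 = k := rfl
            rw [hk, hqdef (k+1), hadef (k+1), hzdef (k+1), hzdef k]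
            push_cast
            field_simp [hw_ne (k+1)]
            ring
      _ = (∑ s ∈ R, q s * (a s * z s)) + ∑ s ∈ R, q s * a s := Finset.sum_add_distrib
  -- identity IC : ∑ q s = ∑ q b
  have IC : ∑ s ∈ R, q s * (s : ℝ) = ∑ s ∈ R, q s * b s := by
    calc ∑ s ∈ R, q s * (s : ℝ)
        = ∑ s ∈ R, ((s * Nat.choose (e + 2) s : ℕ) : ℝ) * w s := by
          refine Finset.sum_congr rfl fun s hs => ?_
          rw [hqdef s]; push_cast; ring
      _ = ∑ s ∈ R, (((e + 2 - s) * Nat.choose (e + 2) s : ℕ) : ℝ) * w (s + 1) := by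
          rw [hRdef]; exact shift2 (e + 2) w
      _ = ∑ s ∈ R, q s * b s := by
          refine Finset.sum_congr rfl fun s hs => ?_
          rw [hqdef s, hbdef s]
          push_cast
          rw [hcast_sub s hs]
          field_simp [hw_ne s]
  -- identity ID : ∑ q s^2 = ∑ q (b s) + ∑ q b
  have ID : ∑ s ∈ R, q s * ((s : ℝ) * s) = (∑ s ∈ R, q s * (b s * s)) + ∑ s ∈ R, q s * b s := by
    calc ∑ s ∈ R, q s * ((s : ℝ) * s)
        = ∑ s ∈ R, ((s * Nat.choose (e + 2) s : ℕ) : ℝ) * ((s : ℝ) * w s) := by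
          refine Finset.sum_congr rfl fun s hs => ?_
          rw [hqdef s]; push_cast; ring
      _ = ∑ s ∈ R, (((e + 2 - s) * Nat.choose (e + 2) s : ℕ) : ℝ) * (((s + 1 : ℕ) : ℝ) * w (s + 1)) := by
          rw [hRdef]; exact shift2 (e + 2) (fun s => (s : ℝ) * w s)
      _ = ∑ s ∈ R, (q s * (b s * s) + q s * b s) := by
          refine Finset.sum_congr rfl fun s hs => ?_
          rw [hqdef s, hbdef s]
          push_cast
          rw [hcast_sub s hs]
          field_simp [hw_ne s]
      _ = (∑ s ∈ R, q s * (b s * s)) + ∑ s ∈ R, q s * b s := Finset.sum_add_distrib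
  -- monotonicity of a
  have hτmono := mono_chain (fun s => w (s - 1) * (w s)⁻¹) 1 (e + 2) (by
    intro s hs1 hs2
    have hk : s + 1 - 1 = s := rfl
    simp only [hk]
    obtain ⟨k, rfl⟩ : ∃ k, s = k + 1 := ⟨s - 1, by omega⟩
    have hkk : (k + 1 : ℕ) - 1 = k := rfl
    rw [hkk]
    rw [← div_eq_mul_inv, ← div_eq_mul_inv, div_le_div_iff₀ (hw_pos (k+1)) (hw_pos (k+2))]
    exact LC k (by omega))
  have ham : ∀ i j : ℕ, i ≤ j → j ≤ e + 2 → a i ≤ a j := by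
    intro i j hij hj
    match i with
    | 0 =>
      rw [hadef 0, hadef j]
      simp only [Nat.cast_zero, zero_mul]
      apply mul_nonneg (Nat.cast_nonneg _)
      exact mul_nonneg (hw_pos _).le (inv_nonneg.mpr (hw_pos _).le)
    | Nat.succ k =>
      have h1 : w (k + 1 - 1) * (w (k+1))⁻¹ ≤ w (j - 1) * (w j)⁻¹ :=
        hτmono (k+1) j (by omega) hij hj
      have h2 : 0 ≤ w (k + 1 - 1) * (w (k+1))⁻¹ :=
        mul_nonneg (hw_pos _).le (inv_nonneg.mpr (hw_pos _).le)
      have h3 : ((k+1 : ℕ) : ℝ) ≤ (j : ℝ) := by exact_mod_cast hij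
      have h4 : (0:ℝ) ≤ ((k+1 : ℕ) : ℝ) := Nat.cast_nonneg _
      rw [hadef (k+1), hadef j]
      exact mul_le_mul h3 h1 h2 (Nat.cast_nonneg _)
  -- monotonicity of b (antitone)
  have hσmono := mono_chain (fun s => -(w (s + 1) * (w s)⁻¹)) 0 (e + 1) (by
    intro s hs1 hs2
    simp only [neg_le_neg_iff]
    have hidx : s + 1 + 1 = s + 2 := rfl
    rw [hidx, ← div_eq_mul_inv, ← div_eq_mul_inv,
      div_le_div_iff₀ (hw_pos (s + 1)) (hw_pos s)]
    have := LC s (by omega)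
    linarith [this])
  have hbm : ∀ i j : ℕ, i ≤ j → j ≤ e + 2 → b j ≤ b i := by
    intro i j hij hj
    have hbnn : ∀ m : ℕ, m ≤ e + 2 → 0 ≤ b m := by
      intro m hm
      rw [hbdef m]
      apply mul_nonneg
      · have : (m : ℝ) ≤ n := by rw [hndef]; exact_mod_cast Nat.cast_le.mpr hm
        linarith
      · exact mul_nonneg (hw_pos _).le (inv_nonneg.mpr (hw_pos _).le)
    rcases Nat.lt_or_ge j (e + 2) with hj2 | hj2
    · -- j ≤ e + 1
      have hσ : w (j + 1) * (w j)⁻¹ ≤ w (i + 1) * (w i)⁻¹ := by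
        have := hσmono i j (by omega) hij (by omega)
        simpa using this
      rw [hbdef j, hbdef i]
      have h1 : n - (j : ℝ) ≤ n - i := by
        have : (i : ℝ) ≤ (j : ℝ) := by exact_mod_cast hij
        linarith
      have h2 : 0 ≤ w (j + 1) * (w j)⁻¹ :=
        mul_nonneg (hw_pos _).le (inv_nonneg.mpr (hw_pos _).le)
      have h3 : (0:ℝ) ≤ n - i := by
        have : (i : ℝ) ≤ n := by rw [hndef]; exact_mod_cast Nat.cast_le.mpr (by omega : i ≤ e + 2)
        linarith
      exact mul_le_mul h1 hσ h2 h3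
    · have hje : j = e + 2 := by omega
      have : b j = 0 := by
        rw [hje, hbdef (e+2), hndef]
        push_cast
        ring
      rw [this]
      exact hbnn i (by omega)
  -- Chebyshev applications
  have C1 : W1 * W1 ≤ W0 * W2 := by
    rw [hW0def, hW1def, hW2def]
    exact cheb R q z z hq_nonneg (fun i _ j _ => mul_self_nonneg _)
  have C2 : W0 * (W2 - W1) ≤ W1 * W1 := by
    have hcond : ∀ i ∈ R, ∀ j ∈ R, 0 ≤ (a i - a j) * ((-z i) - (-z j)) := by
      intro i hi j hj
      rcases le_total i j with h | h
      · have h1 : a i ≤ a j := ham i j h (hmem j hj)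
        have h2 : z j ≤ z i := by
          rw [hzdef i, hzdef j]
          have : (i : ℝ) ≤ (j : ℝ) := by exact_mod_cast h
          linarith
        have h3 := mul_nonneg (by linarith : 0 ≤ a j - a i) (by linarith : 0 ≤ z i - z j)
        linarith [h3]
      · have h1 : a j ≤ a i := ham j i h (hmem i hi)
        have h2 : z i ≤ z j := by
          rw [hzdef i, hzdef j]
          have : (j : ℝ) ≤ (i : ℝ) := by exact_mod_cast h
          linarith
        have h3 := mul_nonneg (by linarith : 0 ≤ a i - a j) (by linarith : 0 ≤ z j - z i)
        linarith [h3]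
    have hch := cheb R q a (fun s => -z s) hq_nonneg hcond
    have e1 : ∑ s ∈ R, q s * (-z s) = -W1 := by
      rw [hW1def, ← Finset.sum_neg_distrib]
      exact Finset.sum_congr rfl fun s _ => by ring
    have e2 : ∑ s ∈ R, q s * (a s * (-z s)) = -∑ s ∈ R, q s * (a s * z s) := by
      rw [← Finset.sum_neg_distrib]
      exact Finset.sum_congr rfl fun s _ => by ring
    rw [e1, e2, ← IA] at hch
    have e3 : ∑ s ∈ R, q s * (a s * z s) = W2 - W1 := by rw [IB]; ring
    rw [e3, ← hW0def] at hch
    linarith [hch]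
  have hQS : ∑ s ∈ R, q s * (s : ℝ) = n * W0 - W1 := by
    have : ∀ s ∈ R, q s * (s : ℝ) = q s * n - q s * z s := by
      intro s hs; rw [hzdef s]; ring
    rw [Finset.sum_congr rfl this, Finset.sum_sub_distrib, ← Finset.sum_mul, ← hW1def, ← hW0def]
    ring
  have hQS2 : ∑ s ∈ R, q s * ((s : ℝ) * s) = n * (n * W0) - 2 * (n * W1) + W2 := by
    have : ∀ s ∈ R, q s * ((s : ℝ) * s)
        = (q s * n) * n - 2 * (n * (q s * z s)) + q s * (z s * z s) := by
      intro s hs; rw [hzdef s]; ring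
    rw [Finset.sum_congr rfl this]
    rw [Finset.sum_add_distrib, Finset.sum_sub_distrib, ← Finset.sum_mul, ← Finset.sum_mul,
      ← Finset.mul_sum, ← Finset.mul_sum]
    rw [← hW0def, ← hW1def, ← hW2def]
    ring
  have C3 : W0 * W2 - W1 * W1 ≤ n * (W0 * W0) - W0 * W1 := by
    have hcond : ∀ i ∈ R, ∀ j ∈ R, 0 ≤ (b i - b j) * ((-(i:ℝ)) - (-(j:ℝ))) := by
      intro i hi j hj
      rcases le_total i j with h | h
      · have h1 : b j ≤ b i := hbm i j h (hmem j hj)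
        have h2 : (i : ℝ) ≤ (j : ℝ) := by exact_mod_cast h
        have h3 := mul_nonneg (by linarith : 0 ≤ b i - b j) (by linarith : (0:ℝ) ≤ j - i)
        linarith [h3]
      · have h1 : b i ≤ b j := hbm j i h (hmem i hi)
        have h2 : (j : ℝ) ≤ (i : ℝ) := by exact_mod_cast h
        have h3 := mul_nonneg (by linarith : 0 ≤ b j - b i) (by linarith : (0:ℝ) ≤ i - j)
        linarith [h3]
    have hch := cheb R q b (fun s => -(s:ℝ)) hq_nonneg hcond
    have e1 : ∑ s ∈ R, q s * (-(s:ℝ)) = -(n * W0 - W1) := by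
      rw [← hQS, ← Finset.sum_neg_distrib]
      exact Finset.sum_congr rfl fun s _ => by ring
    have e2 : ∑ s ∈ R, q s * (b s * (-(s:ℝ))) = -∑ s ∈ R, q s * (b s * s) := by
      rw [← Finset.sum_neg_distrib]
      exact Finset.sum_congr rfl fun s _ => by ring
    rw [e1, e2, ← IC, hQS, ← hW0def] at hch
    have e3 : ∑ s ∈ R, q s * (b s * s) = (n * (n * W0) - 2 * (n * W1) + W2) - (n * W0 - W1) := by
      have := ID
      rw [hQS2] at this
      rw [← IC, hQS] at this
      linarith
    rw [e3] at hch
    linarith [hch]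
  -- basic W bounds
  have hW1nn : 0 ≤ W1 := by
    rw [hW1def]
    exact Finset.sum_nonneg fun s hs => mul_nonneg (hq_nonneg s hs) (hz_nonneg s hs)
  have hW1le : W1 ≤ n * W0 := by
    rw [hW1def, hW0def, Finset.mul_sum]
    apply Finset.sum_le_sum
    intro s hs
    calc q s * z s ≤ q s * n := mul_le_mul_of_nonneg_left (hz_le s hs) (hq_nonneg s hs)
      _ = n * q s := mul_comm _ _
  -- α identities
  obtain ⟨t, htdef⟩ : ∃ t : ℝ, t = 1 / 2 ^ (e + 2) := ⟨_, rfl⟩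
  have htpos : 0 < t := by rw [htdef]; positivity
  have hα' : ∀ p, α p = t * ∑ s ∈ R, (Nat.choose (e + 2 - p) s : ℝ) * w s := by
    intro p
    rw [hα p, htdef, hRdef]
    congr 1
    refine Finset.sum_congr rfl fun s hs => ?_
    congr 1
    rw [hwdef]
    congr 1
    rw [hndef]
    push_cast
    ring
  have hA0 : α 0 = t * ∑ s ∈ R, (Nat.choose (e + 2) s : ℝ) * w s := hα' 0
  have hA1 : α 1 = t * ∑ s ∈ R, (Nat.choose (e + 1) s : ℝ) * w s := by
    have := hα' 1
    rwa [show e + 2 - 1 = e + 1 from rfl] at this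
  have hA2 : α 2 = t * ∑ s ∈ R, (Nat.choose e s : ℝ) * w s := by
    have := hα' 2
    rwa [show e + 2 - 2 = e from by omega] at this
  have hα0W : α 0 = t * W0 := by
    rw [hA0, hW0def]
    congr 1
    exact Finset.sum_congr rfl fun s _ => by rw [hqdef s]
  -- binomial sum values
  have hsum0 : ∑ s ∈ R, ((e + 2).choose s : ℝ) = 2 ^ (e + 2) := by
    rw [hRdef]
    exact_mod_cast congrArg (Nat.cast (R := ℝ)) (Nat.sum_range_choose (e + 2))
  have hsum1 : ∑ s ∈ R, ((e + 1).choose s : ℝ) = 2 ^ (e + 1) := by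
    rw [hRdef, Finset.sum_range_succ]
    rw [show (e + 1).choose (e + 2) = 0 from Nat.choose_eq_zero_of_lt (by omega)]
    push_cast
    rw [add_zero]
    exact_mod_cast congrArg (Nat.cast (R := ℝ)) (Nat.sum_range_choose (e + 1))
  have hsum2 : ∑ s ∈ R, (e.choose s : ℝ) = 2 ^ e := by
    rw [hRdef, Finset.sum_range_succ, Finset.sum_range_succ]
    rw [show e.choose (e + 2) = 0 from Nat.choose_eq_zero_of_lt (by omega),
      show e.choose (e + 1) = 0 from Nat.choose_eq_zero_of_lt (by omega)]
    push_cast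
    rw [add_zero, add_zero]
    exact_mod_cast congrArg (Nat.cast (R := ℝ)) (Nat.sum_range_choose e)
  -- α bounds
  have hle_gen : ∀ (m : ℕ), ∑ s ∈ R, (m.choose s : ℝ) * w s ≤ ∑ s ∈ R, (m.choose s : ℝ) := by
    intro m
    apply Finset.sum_le_sum
    intro s _
    calc (m.choose s : ℝ) * w s ≤ (m.choose s : ℝ) * 1 :=
          mul_le_mul_of_nonneg_left (hw_le1 s) (Nat.cast_nonneg _)
      _ = (m.choose s : ℝ) := mul_one _
  have hnn_gen : ∀ (m : ℕ), 0 ≤ ∑ s ∈ R, (m.choose s : ℝ) * w s := by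
    intro m
    exact Finset.sum_nonneg fun s _ => mul_nonneg (Nat.cast_nonneg _) (hw_pos s).le
  have hp2 : (0:ℝ) < 2 ^ (e + 2) := by positivity
  have ht0 : t * 2 ^ (e + 2) = 1 := by
    rw [htdef, one_div, inv_mul_cancel₀ hp2.ne']
  have ht1 : t * 2 ^ (e + 1) = 1 / 2 := by
    have hp1 : (2:ℝ) ^ (e + 1) ≠ 0 := by positivity
    rw [htdef, pow_succ]
    field_simp
  have ht2 : t * 2 ^ e = 1 / 4 := by
    have hp1 : (2:ℝ) ^ e ≠ 0 := by positivity
    rw [htdef, pow_succ, pow_succ]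
    field_simp
    ring
  have hα0_le : α 0 ≤ 1 := by
    rw [hA0, ← ht0]
    have := hle_gen (e + 2)
    rw [hsum0] at this
    exact mul_le_mul_of_nonneg_left this htpos.le
  have hα0_nn : 0 ≤ α 0 := by
    rw [hA0]
    exact mul_nonneg htpos.le (hnn_gen _)
  have hα1_le : α 1 ≤ 1 / 2 := by
    rw [hA1, ← ht1]
    have := hle_gen (e + 1)
    rw [hsum1] at this
    exact mul_le_mul_of_nonneg_left this htpos.le
  have hα1_nn : 0 ≤ α 1 := by
    rw [hA1]
    exact mul_nonneg htpos.le (hnn_gen _)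
  have hα2_le : α 2 ≤ 1 / 4 := by
    rw [hA2, ← ht2]
    have := hle_gen e
    rw [hsum2] at this
    exact mul_le_mul_of_nonneg_left this htpos.le
  have hα2_nn : 0 ≤ α 2 := by
    rw [hA2]
    exact mul_nonneg htpos.le (hnn_gen _)
  -- lower bound on α 1 - α 2
  have hden : Einv / 4 ≤ α 1 - α 2 := by
    have hdiff : ∀ s ∈ R, ((e + 1).choose s : ℝ) - (e.choose s : ℝ) ≥ 0 := by
      intro s _
      have : e.choose s ≤ (e + 1).choose s := Nat.choose_le_choose s (by omega)
      have := (Nat.cast_le (α := ℝ)).mpr this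
      linarith
    have step1 : α 1 - α 2
        = t * ∑ s ∈ R, (((e + 1).choose s : ℝ) - (e.choose s : ℝ)) * w s := by
      rw [hA1, hA2, ← mul_sub, ← Finset.sum_sub_distrib]
      congr 1
      exact Finset.sum_congr rfl fun s _ => by ring
    have step2 : ∑ s ∈ R, (((e + 1).choose s : ℝ) - (e.choose s : ℝ)) * w s
        ≥ ∑ s ∈ R, (((e + 1).choose s : ℝ) - (e.choose s : ℝ)) * Einv := by
      apply Finset.sum_le_sum
      intro s hs
      exact mul_le_mul_of_nonneg_left (hw_ge s) (hdiff s hs)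
    have step3 : ∑ s ∈ R, (((e + 1).choose s : ℝ) - (e.choose s : ℝ)) * Einv
        = 2 ^ e * Einv := by
      rw [← Finset.sum_mul, Finset.sum_sub_distrib, hsum1, hsum2]
      rw [pow_succ]
      ring
    rw [step1]
    have : α 1 - α 2 ≥ t * (2 ^ e * Einv) := by
      rw [step1]
      apply mul_le_mul_of_nonneg_left _ htpos.le
      rw [← step3]; exact step2
    calc Einv / 4 = (t * 2 ^ e) * Einv := by rw [ht2]; ring
      _ = t * (2 ^ e * Einv) := by ring
      _ ≤ t * ∑ s ∈ R, (((e + 1).choose s : ℝ) - (e.choose s : ℝ)) * w s := by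
          apply mul_le_mul_of_nonneg_left _ htpos.le
          rw [← step3]; exact step2
  have hdenpos : 0 < α 1 - α 2 := lt_of_lt_of_le (by positivity) hden
  -- W-level identities for α 1, α 2
  have hB1 : n * (∑ s ∈ R, ((e + 1).choose s : ℝ) * w s) = W1 := by
    rw [Finset.mul_sum, hW1def]
    rw [Finset.sum_congr rfl hterm1]
    refine (Finset.sum_congr rfl fun s hs => ?_).symm
    have := nat_id1 (e + 1) s
    rw [show e + 1 + 1 = e + 2 from rfl] at this
    rw [this]
    push_cast
    rw [hndef]
    push_cast
    ring
  have hB2 : n * ((n - 1) * ∑ s ∈ R, (e.choose s : ℝ) * w s) = W2 - W1 := by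
    have hterm2 : ∀ s ∈ R, q s * (z s * z s) - q s * z s
        = (((e + 2 - s) * ((e + 1 - s) * Nat.choose (e + 2) s) : ℕ) : ℝ) * w s := by
      intro s hs
      have hs' := hmem s hs
      rcases Nat.lt_or_ge s (e + 2) with h | h
      · rw [hqdef s, hzdef s]
        push_cast [Nat.cast_sub (by omega : s ≤ e + 2), Nat.cast_sub (by omega : s ≤ e + 1)]
        rw [hndef]
        push_cast
        ring
      · have hse : s = e + 2 := by omega
        rw [hse, hqdef (e+2), hzdef (e+2)]
        rw [show e + 2 - (e + 2) = 0 from by omega]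
        rw [hndef]
        push_cast
        ring
    have hid2 : ∀ s : ℕ, (e + 2 - s) * ((e + 1 - s) * Nat.choose (e + 2) s)
        = (e + 2) * ((e + 1) * Nat.choose e s) := by
      intro s
      have h1 := nat_id1 (e + 1) s
      rw [show e + 1 + 1 = e + 2 from rfl] at h1
      have h2 := nat_id1 e s
      calc (e + 2 - s) * ((e + 1 - s) * Nat.choose (e + 2) s)
          = (e + 1 - s) * ((e + 2 - s) * Nat.choose (e + 2) s) := by ring
        _ = (e + 1 - s) * ((e + 2) * Nat.choose (e + 1) s) := by rw [h1]
        _ = (e + 2) * ((e + 1 - s) * Nat.choose (e + 1) s) := by ring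
        _ = (e + 2) * ((e + 1) * Nat.choose e s) := by rw [h2]
    calc n * ((n - 1) * ∑ s ∈ R, (e.choose s : ℝ) * w s)
        = ∑ s ∈ R, (((e + 2) * ((e + 1) * Nat.choose e s) : ℕ) : ℝ) * w s := by
          rw [Finset.mul_sum, Finset.mul_sum]
          refine Finset.sum_congr rfl fun s hs => ?_
          push_cast
          rw [hndef]
          push_cast
          ring
      _ = ∑ s ∈ R, (((e + 2 - s) * ((e + 1 - s) * Nat.choose (e + 2) s) : ℕ) : ℝ) * w s := by
          refine Finset.sum_congr rfl fun s _ => ?_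
          rw [hid2 s]
      _ = ∑ s ∈ R, (q s * (z s * z s) - q s * z s) :=
          (Finset.sum_congr rfl fun s hs => (hterm2 s hs)).symm
      _ = W2 - W1 := by rw [Finset.sum_sub_distrib, ← hW2def, ← hW1def]
  have hα1W : n * α 1 = t * W1 := by
    rw [hA1, ← hB1]; ring
  have hα2W : n * ((n - 1) * α 2) = t * (W2 - W1) := by
    rw [hA2, ← hB2]; ring
  -- final algebra
  have hn1 : (1 : ℝ) ≤ n - 1 := by linarith
  obtain ⟨⟨hD_ub, hD_lb⟩, hnum_lb', hnum_ub'⟩ :=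
    final_alg n t W0 W1 W2 (α 0) (α 1) (α 2) hn2 htpos hW0pos hW1nn hW1le C1 C2 C3
      hα0W hα1W hα2W hα0_le hα0_nn
  have hnum_eq : c + α 1 ^ 2 - α 0 * α 2
      = (n - 2) * (α 0 * α 2) - (n - 1) * α 1 ^ 2 + α 0 * α 1 := by
    rw [hc]; ring
  have hnum_ub : c + α 1 ^ 2 - α 0 * α 2 ≤ 1 / 2 := by rw [hnum_eq]; exact hnum_ub'
  have hnum_lb : 0 ≤ c + α 1 ^ 2 - α 0 * α 2 := by rw [hnum_eq]; exact hnum_lb'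
  -- conclude
  refine ⟨?_, ?_, ?_, ?_⟩
  · -- s0
    rw [hs0]
    have h0 : (0:ℝ) ≤ (n - 1) * α 2 := mul_nonneg (by linarith) hα2_nn
    rw [abs_of_nonneg (by linarith : (0:ℝ) ≤ (n - 1) * α 2 + α 1)]
    have h1 : (n - 1) * α 2 ≤ (n - 1) * (1/4) :=
      mul_le_mul_of_nonneg_left hα2_le (by linarith)
    linarith [hα1_le]
  · -- s1
    rw [hs1, abs_neg, abs_of_nonneg hα1_nn]
    exact hα1_le
  · -- s2
    rw [hs2]
    have hnum_abs : |c + α 1 ^ 2 - α 0 * α 2| ≤ 1 / 2 := abs_le.mpr ⟨by linarith, hnum_ub⟩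
    rw [abs_div, abs_of_pos hdenpos]
    calc |c + α 1 ^ 2 - α 0 * α 2| / (α 1 - α 2) ≤ (1 / 2) / (Einv / 4) :=
          div_le_div₀ (by norm_num) hnum_abs (by positivity) hden
      _ = 2 * E := by
          have hEinv' : Einv = E⁻¹ := eq_inv_of_mul_eq_one_left hEinvE
          rw [hEinv']
          field_simp
          ring
  · -- s3
    rw [hs3]
    have hD_abs : |α 1 ^ 2 - α 0 * α 2| ≤ 1 / (4 * (n - 1)) := abs_le.mpr ⟨by linarith, hD_ub⟩
    rw [abs_div, abs_of_pos hdenpos]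
    have hstep : |α 1 ^ 2 - α 0 * α 2| / (α 1 - α 2) ≤ (1 / (4 * (n - 1))) / (Einv / 4) :=
      div_le_div₀ (by positivity) hD_abs (by positivity) hden
    have heq : (1 / (4 * (n - 1))) / (Einv / 4) = E / (n - 1) := by
      have hEinv' : Einv = E⁻¹ := eq_inv_of_mul_eq_one_left hEinvE
      have hn1' : n - 1 ≠ 0 := by linarith
      rw [hEinv']
      field_simp
    have hfin : E / (n - 1) ≤ 2 * E / n := by
      rw [div_le_div_iff₀ (by linarith) hnpos]
      have h5 := mul_le_mul_of_nonneg_left (by linarith : n ≤ 2 * (n - 1)) hEpos.le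
      linarith [h5]
    calc |α 1 ^ 2 - α 0 * α 2| / (α 1 - α 2) ≤ (1 / (4 * (n - 1))) / (Einv / 4) := hstep
      _ = E / (n - 1) := heq
      _ ≤ 2 * E / n := hfin
end

section
/- LIME limit explanation for a pixel coordinate function: let z₁,…,z_d be i.i.d. Bernoulli(1/2), π the corresponding weight, and for u ∈ J_j let x_u = z_j ξ_u + (1−z_j) ξ̄_u. Then E[π x_u] = α₁(ξ_u − ξ̄_u) + α₀ ξ̄_u, E[π z_j x_u] = α₁(ξ_u − ξ̄_u) + α₁ ξ̄_u, and for k ≠ j, E[π z_k x_u] = α₂(ξ_u − ξ̄_u) + α₁ ξ̄_u. -/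
lemma card_perm_aux {d : ℕ} (σ : Equiv.Perm (Fin d)) (z : Fin d → Bool) :
    (Finset.univ.filter (fun i => z (σ i) = false)).card
      = (Finset.univ.filter (fun i => z i = false)).card := by
  apply Finset.card_bij (fun a _ => σ a)
  · intro a ha; simp only [Finset.mem_filter, Finset.mem_univ, true_and] at ha ⊢; exact ha
  · intro a _ b _ h; exact σ.injective h
  · intro b hb
    refine ⟨σ.symm b, ?_, by simp⟩
    simp only [Finset.mem_filter, Finset.mem_univ, true_and, Equiv.apply_symm_apply] at hb ⊢
    exact hb

lemma sum_perm_aux {d : ℕ} (π : (Fin d → Bool) → ℝ)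
    (hπ : ∀ (σ : Equiv.Perm (Fin d)) (z : Fin d → Bool), π (fun i => z (σ i)) = π z)
    (σ : Equiv.Perm (Fin d)) (F : (Fin d → Bool) → ℝ) :
    ∑ z : Fin d → Bool, π z * F (fun i => z (σ i))
      = ∑ z : Fin d → Bool, π z * F z := by
  refine Fintype.sum_equiv
    ⟨fun z i => z (σ i), fun z i => z (σ.symm i), fun z => by funext i; simp,
      fun z => by funext i; simp⟩ _ _ ?_
  intro z
  show π z * F (fun i => z (σ i)) = π (fun i => z (σ i)) * F (fun i => z (σ i))
  rw [hπ]

/-- LIME limit quantities for a pixel coordinate function: with `z` i.i.d. Bernoulli(1/2),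
`π = ψ(S/d)`, `x_u = z_j ξ_u + (1-z_j) ξ̄_u`, and `α_p = E[π z₁⋯z_p]`, we compute
`E[π x_u]`, `E[π z_j x_u]`, and `E[π z_k x_u]` for `k ≠ j`. Expectations are written as
uniform averages over `z : Fin d → Bool`. -/
theorem stmt18 (d : ℕ) (hd : 2 ≤ d) (ν : ℝ) (hν : 0 < ν)
    (ψ : ℝ → ℝ)
    (hψ : ∀ t, ψ t = Real.exp (-(1 - Real.sqrt (1 - t)) ^ 2 / (2 * ν ^ 2)))
    (π : (Fin d → Bool) → ℝ)
    (hπ : ∀ z, π z = ψ (((Finset.univ.filter (fun j => z j = false)).card : ℝ) / d))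
    (ind : (Fin d → Bool) → Fin d → ℝ)
    (hind : ∀ z j, ind z j = if z j then 1 else 0)
    (α : ℕ → ℝ)
    (hα : ∀ p : ℕ, α p = (1 / 2 ^ d) * ∑ z : Fin d → Bool,
      π z * ∏ i ∈ Finset.univ.filter (fun i : Fin d => (i : ℕ) < p), ind z i)
    (j k : Fin d) (hjk : k ≠ j) (ξu ξbu : ℝ)
    (x : (Fin d → Bool) → ℝ)
    (hx : ∀ z, x z = ind z j * ξu + (1 - ind z j) * ξbu) :
    (1 / 2 ^ d) * (∑ z : Fin d → Bool, π z * x z)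
        = α 1 * (ξu - ξbu) + α 0 * ξbu ∧
    (1 / 2 ^ d) * (∑ z : Fin d → Bool, π z * ind z j * x z)
        = α 1 * (ξu - ξbu) + α 1 * ξbu ∧
    (1 / 2 ^ d) * (∑ z : Fin d → Bool, π z * ind z k * x z)
        = α 2 * (ξu - ξbu) + α 1 * ξbu := by
  have hπinv : ∀ (σ : Equiv.Perm (Fin d)) (z : Fin d → Bool),
      π (fun i => z (σ i)) = π z := by
    intro σ z
    rw [hπ, hπ, card_perm_aux]
  set i0 : Fin d := ⟨0, by omega⟩ with hi0
  set i1 : Fin d := ⟨1, by omega⟩ with hi1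
  have hi01 : i0 ≠ i1 := by simp [hi0, hi1, Fin.ext_iff]
  -- the α's in concrete form
  have hf0 : (Finset.univ.filter (fun i : Fin d => (i : ℕ) < 0)) = ∅ := by
    ext i; simp
  have hf1 : (Finset.univ.filter (fun i : Fin d => (i : ℕ) < 1)) = {i0} := by
    ext i
    simp only [Finset.mem_filter, Finset.mem_univ, true_and, Finset.mem_singleton, Fin.ext_iff]
    simp only [hi0, Fin.val_mk]
    omega
  have hf2 : (Finset.univ.filter (fun i : Fin d => (i : ℕ) < 2)) = {i0, i1} := by
    ext i
    simp only [Finset.mem_filter, Finset.mem_univ, true_and, Finset.mem_insert,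
      Finset.mem_singleton, Fin.ext_iff]
    simp only [hi0, hi1, Fin.val_mk]
    omega
  have hα0 : α 0 = (1 / 2 ^ d) * ∑ z : Fin d → Bool, π z := by
    rw [hα]; simp [hf0]
  have hα1 : α 1 = (1 / 2 ^ d) * ∑ z : Fin d → Bool, π z * ind z i0 := by
    rw [hα, hf1]; simp
  have hα2 : α 2 = (1 / 2 ^ d) * ∑ z : Fin d → Bool, π z * (ind z i0 * ind z i1) := by
    rw [hα, hf2]
    congr 1
    apply Finset.sum_congr rfl
    intro z _
    rw [Finset.prod_pair hi01]
  -- symmetry lemmas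
  have hSj : ∑ z : Fin d → Bool, π z * ind z j
      = ∑ z : Fin d → Bool, π z * ind z i0 := by
    have := sum_perm_aux π hπinv (Equiv.swap i0 j) (fun z => if z i0 then (1:ℝ) else 0)
    simpa [hind, Equiv.swap_apply_left] using this
  have hSk : ∑ z : Fin d → Bool, π z * ind z k
      = ∑ z : Fin d → Bool, π z * ind z i0 := by
    have := sum_perm_aux π hπinv (Equiv.swap i0 k) (fun z => if z i0 then (1:ℝ) else 0)
    simpa [hind, Equiv.swap_apply_left] using this
  -- a permutation sending i0 ↦ j and i1 ↦ k
  have hm : Equiv.swap i0 j k ≠ i0 := by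
    intro h
    apply hjk
    have := congrArg (Equiv.swap i0 j) h
    rwa [Equiv.swap_apply_self, Equiv.swap_apply_left] at this
  set σ2 : Equiv.Perm (Fin d) := (Equiv.swap i1 (Equiv.swap i0 j k)).trans (Equiv.swap i0 j)
    with hσ2
  have hσ2i0 : σ2 i0 = j := by
    rw [hσ2]
    simp only [Equiv.trans_apply]
    rw [Equiv.swap_apply_of_ne_of_ne hi01 (Ne.symm hm), Equiv.swap_apply_left]
  have hσ2i1 : σ2 i1 = k := by
    rw [hσ2]
    simp only [Equiv.trans_apply]
    rw [Equiv.swap_apply_left, Equiv.swap_apply_self]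
  have hSjk : ∑ z : Fin d → Bool, π z * (ind z j * ind z k)
      = ∑ z : Fin d → Bool, π z * (ind z i0 * ind z i1) := by
    have := sum_perm_aux π hπinv σ2
      (fun z => (if z i0 then (1:ℝ) else 0) * (if z i1 then (1:ℝ) else 0))
    simpa [hind, hσ2i0, hσ2i1] using this
  -- pointwise algebra
  have e1 : ∀ z, π z * x z = π z * ind z j * (ξu - ξbu) + π z * ξbu := by
    intro z; rw [hx, hind]; by_cases h : z j <;> simp [h] <;> ring
  have e2 : ∀ z, π z * ind z j * x z
      = π z * ind z j * (ξu - ξbu) + π z * ind z j * ξbu := by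
    intro z; rw [hx, hind]; by_cases h : z j <;> simp [h] <;> ring
  have e3 : ∀ z, π z * ind z k * x z
      = π z * (ind z j * ind z k) * (ξu - ξbu) + π z * ind z k * ξbu := by
    intro z; rw [hx, hind, hind]
    by_cases h : z j <;> by_cases h' : z k <;> simp [h, h'] <;> ring
  refine ⟨?_, ?_, ?_⟩
  · rw [Finset.sum_congr rfl (fun z _ => e1 z), Finset.sum_add_distrib,
      ← Finset.sum_mul, ← Finset.sum_mul, hSj, hα0, hα1]
    ring
  · rw [Finset.sum_congr rfl (fun z _ => e2 z), Finset.sum_add_distrib,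
      ← Finset.sum_mul, ← Finset.sum_mul, hSj, hα1]
    ring
  · rw [Finset.sum_congr rfl (fun z _ => e3 z), Finset.sum_add_distrib,
      ← Finset.sum_mul, ← Finset.sum_mul, hSjk, hSk, hα1, hα2]
    ring
end
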